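/- arXiv:2010.10134 — 15 statements merged into one kernel-verified Lean document; each statement's English description precedes it below -/
import Mathlib

section
/- (Path-encoding lemma of Sankowski.) Regard 1 − u·Ã as a matrix over the polynomial ring R[u] and let adj denote the adjugate, so that (1 − u·Ã) * adj(1 − u·Ã) = det(1 − u·Ã) • 1. For all i, j ∈ V, the (i,j) entry of adj(1 − u·Ã) is nonzero if and only if j is reachable from i in G, and in that case the least degree of u occurring with nonzero coefficient in this entry equals dist_G(i,j), the length of the shortest path in G from i to j. -/
/-- A walk of length `d` from `i` to `j` in the directed graph with edge set `E`. -/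
def HasWalk {V : Type*} (E : Set (V × V)) (d : ℕ) (i j : V) : Prop :=
  ∃ v : Fin (d + 1) → V, v 0 = i ∧ v (Fin.last d) = j ∧
    ∀ t : Fin d, (v t.castSucc, v t.succ) ∈ E

/-- Walks indexed by `ℕ → V`, easier to manipulate. -/
def HasWalk' {V : Type*} (E : Set (V × V)) (d : ℕ) (i j : V) : Prop :=
  ∃ v : ℕ → V, v 0 = i ∧ v d = j ∧ ∀ t < d, (v t, v (t + 1)) ∈ E

lemma hasWalk_iff {V : Type*} (E : Set (V × V)) (d : ℕ) (i j : V) :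
    HasWalk E d i j ↔ HasWalk' E d i j := by
  constructor
  · rintro ⟨v, h0, hl, he⟩
    refine ⟨fun n => v ⟨min n d, by omega⟩, ?_, ?_, ?_⟩
    · simpa using h0
    · simpa [Fin.last] using hl
    · intro t ht
      have := he ⟨t, ht⟩
      have h1 : (⟨min t d, by omega⟩ : Fin (d + 1)) = (⟨t, ht⟩ : Fin d).castSucc := by
        ext; simp [Nat.min_eq_left (le_of_lt ht)]
      have h2 : (⟨min (t + 1) d, by omega⟩ : Fin (d + 1)) = (⟨t, ht⟩ : Fin d).succ := by
        ext; simp [Nat.min_eq_left ht]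
      show (v ⟨min t d, by omega⟩, v ⟨min (t + 1) d, by omega⟩) ∈ E
      rw [h1, h2]; exact this
  · rintro ⟨v, h0, hl, he⟩
    exact ⟨fun t => v t.val, h0, hl, fun t => he t.val t.isLt⟩

lemma hasWalk'_zero {V : Type*} (E : Set (V × V)) (i j : V) :
    HasWalk' E 0 i j ↔ i = j := by
  constructor
  · rintro ⟨v, h0, hl, _⟩; rw [← h0, ← hl]
  · rintro rfl; exact ⟨fun _ => i, rfl, rfl, fun t ht => by omega⟩

lemma hasWalk'_succ {V : Type*} (E : Set (V × V)) (d : ℕ) (i j : V) :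
    HasWalk' E (d + 1) i j ↔ ∃ m, HasWalk' E d i m ∧ (m, j) ∈ E := by
  constructor
  · rintro ⟨v, h0, hl, he⟩
    exact ⟨v d, ⟨v, h0, rfl, fun t ht => he t (by omega)⟩, hl ▸ he d (by omega)⟩
  · rintro ⟨m, ⟨v, h0, hl, he⟩, hedge⟩
    refine ⟨fun n => if n ≤ d then v n else j, by simp [h0], by simp, ?_⟩
    intro t ht
    rcases lt_or_eq_of_le (Nat.lt_succ_iff.mp ht) with h | h
    · simpa [Nat.le_of_lt h, Nat.succ_le_of_lt h] using he t h
    · subst h; simpa [hl] using hedge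

section Main

set_option linter.unusedSectionVars false

variable {V : Type*} [Fintype V] [DecidableEq V] [Nonempty V]
    (E : Set (V × V)) [DecidablePred fun p => p ∈ E]

/-- The integer 0/1 adjacency matrix. -/
noncomputable def Badj : Matrix V V ℤ :=
  Matrix.of fun i j => if (i, j) ∈ E then 1 else 0

lemma Badj_pow_nonneg (d : ℕ) (i j : V) : 0 ≤ ((Badj E) ^ d) i j := by
  induction d generalizing j with
  | zero => by_cases h : i = j <;> simp [Matrix.one_apply, h]
  | succ d ih =>
      rw [pow_succ, Matrix.mul_apply]
      refine Finset.sum_nonneg fun m _ => mul_nonneg (ih m) ?_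
      by_cases h : (m, j) ∈ E <;> simp [Badj, h]

lemma Badj_pow_pos (d : ℕ) (i j : V) (h : HasWalk' E d i j) :
    0 < ((Badj E) ^ d) i j := by
  induction d generalizing j with
  | zero => rw [(hasWalk'_zero E i j).mp h]; simp
  | succ d ih =>
      obtain ⟨m, hw, he⟩ := (hasWalk'_succ E d i j).mp h
      rw [pow_succ, Matrix.mul_apply]
      refine Finset.sum_pos' (fun m' _ => mul_nonneg (Badj_pow_nonneg E d i m') ?_)
        ⟨m, Finset.mem_univ m, mul_pos (ih m hw) (by simp [Badj, he])⟩
      by_cases h' : (m', j) ∈ E <;> simp [Badj, h']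

variable (A : Matrix V V (MvPolynomial (V × V) ℤ))
    (hA : ∀ i j, A i j = if (i, j) ∈ E then MvPolynomial.X (i, j) else 0)

include hA

lemma Apow_map : ∀ d, (MvPolynomial.eval (fun _ => (1 : ℤ))).mapMatrix (A ^ d) = (Badj E) ^ d := by
  intro d
  rw [map_pow]
  congr 1
  ext i j
  simp [hA i j, Badj, apply_ite (MvPolynomial.eval fun _ => (1 : ℤ))]

lemma Apow_ne_zero_iff (d : ℕ) (i j : V) :
    (A ^ d) i j ≠ 0 ↔ HasWalk' E d i j := by
  constructor
  · intro h
    by_contra hw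
    apply h
    clear h
    induction d generalizing j with
    | zero =>
        have : i ≠ j := fun h => hw ((hasWalk'_zero E i j).mpr h)
        simp [Matrix.one_apply, this]
    | succ d ih =>
        rw [pow_succ, Matrix.mul_apply]
        refine Finset.sum_eq_zero fun m _ => ?_
        by_cases he : (m, j) ∈ E
        · have : ¬ HasWalk' E d i m := fun h => hw ((hasWalk'_succ E d i j).mpr ⟨m, h, he⟩)
          rw [ih m this, zero_mul]
        · rw [hA m j, if_neg he, mul_zero]
  · intro h hz
    have := Badj_pow_pos E d i j h
    rw [← Apow_map E A hA d] at this
    simp [hz] at this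

variable (M : Matrix V V (Polynomial (MvPolynomial (V × V) ℤ)))
    (hM : M = 1 - Matrix.of fun i j => Polynomial.X * Polynomial.C (A i j))

include hM

lemma det_coeff_zero : (M.det).coeff 0 = 1 := by
  rw [Polynomial.coeff_zero_eq_eval_zero, ← Polynomial.coe_evalRingHom, RingHom.map_det]
  have : (Polynomial.evalRingHom (0 : MvPolynomial (V × V) ℤ)).mapMatrix M = 1 := by
    ext i j
    by_cases h : i = j <;>
      simp [hM, Matrix.one_apply, h, Matrix.sub_apply]
  rw [this, Matrix.det_one]

lemma adj_entry_eq (i j : V) :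
    M.adjugate i j =
      M.det * ((1 : Matrix V V (Polynomial (MvPolynomial (V × V) ℤ))) i j)
      + ∑ m, M.adjugate i m * (Polynomial.X * Polynomial.C (A m j)) := by
  have h2 : M.adjugate =
      M.det • (1 : Matrix V V (Polynomial (MvPolynomial (V × V) ℤ)))
      + M.adjugate * (Matrix.of fun i j => Polynomial.X * Polynomial.C (A i j)) := by
    calc M.adjugate
        = M.adjugate * M
          + M.adjugate * (Matrix.of fun i j => Polynomial.X * Polynomial.C (A i j)) := by
          rw [← Matrix.mul_add, hM, sub_add_cancel, Matrix.mul_one]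
      _ = _ := by rw [Matrix.adjugate_mul]
  conv_lhs => rw [h2]
  rw [Matrix.add_apply, Matrix.smul_apply, smul_eq_mul, Matrix.mul_apply]
  rfl

lemma adj_rec0 (i j : V) :
    (M.adjugate i j).coeff 0 =
      (M.det).coeff 0 * ((1 : Matrix V V (Polynomial (MvPolynomial (V × V) ℤ))) i j).coeff 0 := by
  rw [adj_entry_eq E A hA M hM i j, Polynomial.coeff_add, Polynomial.mul_coeff_zero,
    Polynomial.finset_sum_coeff]
  have : ∀ m : V, (M.adjugate i m * (Polynomial.X * Polynomial.C (A m j))).coeff 0 = 0 := by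
    intro m
    rw [Polynomial.mul_coeff_zero, Polynomial.mul_coeff_zero, Polynomial.coeff_X_zero,
      zero_mul, mul_zero]
  rw [Finset.sum_eq_zero fun m _ => this m, add_zero]

lemma adj_recS (n : ℕ) (i j : V) :
    (M.adjugate i j).coeff (n + 1) =
      (M.det).coeff (n + 1) * ((1 : Matrix V V (Polynomial (MvPolynomial (V × V) ℤ))) i j).coeff 0
      + ∑ m, (M.adjugate i m).coeff n * A m j := by
  rw [adj_entry_eq E A hA M hM i j, Polynomial.coeff_add, Polynomial.finset_sum_coeff]
  congr 1
  · by_cases h : i = j <;> simp [Matrix.one_apply, h]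
  · refine Finset.sum_congr rfl fun m _ => ?_
    rw [show M.adjugate i m * (Polynomial.X * Polynomial.C (A m j))
        = Polynomial.X * (M.adjugate i m * Polynomial.C (A m j)) by ring,
      Polynomial.coeff_X_mul, Polynomial.coeff_mul_C]

/-- `(1 : Matrix) i j` over polynomials has constant coefficient the Kronecker delta,
which equals `(A ^ 0) i j`. -/
lemma one_coeff_eq (i j : V) :
    ((1 : Matrix V V (Polynomial (MvPolynomial (V × V) ℤ))) i j).coeff 0 = (A ^ 0) i j := by
  by_cases h : i = j <;> simp [Matrix.one_apply, h]

lemma adj_coeff_formula (i : V) : ∀ n : ℕ, ∀ j : V,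
    (M.adjugate i j).coeff n =
      ∑ k ∈ Finset.range (n + 1), (M.det).coeff k * ((A ^ (n - k)) i j) := by
  intro n
  induction n with
  | zero =>
      intro j
      rw [adj_rec0 E A hA M hM i j, one_coeff_eq E A hA M hM i j, Finset.sum_range_one]
  | succ n ih =>
      intro j
      rw [adj_recS E A hA M hM n i j, one_coeff_eq E A hA M hM i j, Finset.sum_range_succ]
      have hswap : ∑ m, (M.adjugate i m).coeff n * A m j
          = ∑ k ∈ Finset.range (n + 1), (M.det).coeff k * ((A ^ (n + 1 - k)) i j) := by
        simp_rw [ih, Finset.sum_mul, mul_assoc]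
        rw [Finset.sum_comm]
        refine Finset.sum_congr rfl fun k hk => ?_
        rw [← Finset.mul_sum]
        congr 1
        rw [← Matrix.mul_apply, ← pow_succ,
          show n - k + 1 = n + 1 - k by
            have := Finset.mem_range.mp hk; omega]
      rw [hswap]
      simp [add_comm, Nat.sub_self]

end Main

/-- Path-encoding lemma of Sankowski: the `(i,j)` entry of the adjugate of `1 - u • Ã`
(over the polynomial ring `R[u]`) is nonzero iff `j` is reachable from `i`, in which case
its trailing degree (least degree of `u` with nonzero coefficient) equals `dist_G(i,j)`. -/
theorem stmt2 {V : Type*} [Fintype V] [DecidableEq V] [Nonempty V]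
    (E : Set (V × V)) [DecidablePred fun p => p ∈ E]
    (A : Matrix V V (MvPolynomial (V × V) ℤ))
    (hA : ∀ i j, A i j = if (i, j) ∈ E then MvPolynomial.X (i, j) else 0)
    (M : Matrix V V (Polynomial (MvPolynomial (V × V) ℤ)))
    (hM : M = 1 - Matrix.of fun i j => Polynomial.X * Polynomial.C (A i j)) :
    ∀ i j : V,
      (M.adjugate i j ≠ 0 ↔ ∃ d, HasWalk E d i j) ∧
      ((∃ d, HasWalk E d i j) →
        (M.adjugate i j).natTrailingDegree = sInf {d : ℕ | HasWalk E d i j}) := by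
  intro i j
  have F1 := fun n => adj_coeff_formula E A hA M hM i n j
  have hdet0 := det_coeff_zero E A hA M hM
  -- coefficients below any index with no short walk vanish
  have K1 : ∀ n : ℕ, (∀ d ≤ n, ¬ HasWalk E d i j) → (M.adjugate i j).coeff n = 0 := by
    intro n hn
    rw [F1 n]
    refine Finset.sum_eq_zero fun k _ => ?_
    have hz : (A ^ (n - k)) i j = 0 := by
      by_contra h
      exact hn (n - k) (by omega)
        ((hasWalk_iff E (n - k) i j).mpr ((Apow_ne_zero_iff E A hA (n - k) i j).mp h))
    rw [hz, mul_zero]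
  by_cases hreach : ∃ d, HasWalk E d i j
  · -- reachable case
    have hSne : {d : ℕ | HasWalk E d i j}.Nonempty := hreach
    set d₀ := sInf {d : ℕ | HasWalk E d i j} with hd₀
    have hmem : HasWalk E d₀ i j := Nat.sInf_mem hSne
    have hApow : (A ^ d₀) i j ≠ 0 :=
      (Apow_ne_zero_iff E A hA d₀ i j).mpr ((hasWalk_iff E d₀ i j).mp hmem)
    have K2 : (M.adjugate i j).coeff d₀ = (A ^ d₀) i j := by
      rw [F1 d₀]
      rw [Finset.sum_eq_single_of_mem 0 (Finset.mem_range.mpr (by omega))]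
      · rw [hdet0, one_mul, Nat.sub_zero]
      · intro k hk hk0
        have hklt : k ≤ d₀ := by have := Finset.mem_range.mp hk; omega
        have : ¬ HasWalk E (d₀ - k) i j := by
          intro hw
          exact Nat.notMem_of_lt_sInf (show d₀ - k < sInf _ by rw [← hd₀]; omega) hw
        have hz : (A ^ (d₀ - k)) i j = 0 := by
          by_contra h
          exact this ((hasWalk_iff E _ i j).mpr ((Apow_ne_zero_iff E A hA _ i j).mp h))
        rw [hz, mul_zero]
    have hne : M.adjugate i j ≠ 0 := by
      intro h
      rw [h, Polynomial.coeff_zero] at K2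
      exact hApow K2.symm
    refine ⟨⟨fun _ => hreach, fun _ => hne⟩, fun _ => ?_⟩
    refine le_antisymm (Polynomial.natTrailingDegree_le_of_ne_zero (K2 ▸ hApow)) ?_
    refine Polynomial.le_natTrailingDegree hne fun m hm => ?_
    refine K1 m fun d hd hw => ?_
    exact Nat.notMem_of_lt_sInf (show d < sInf _ by rw [← hd₀]; omega) hw
  · -- unreachable case
    have hzero : M.adjugate i j = 0 := by
      refine Polynomial.ext fun n => ?_
      rw [Polynomial.coeff_zero]
      exact K1 n fun d _ hw => hreach ⟨d, hw⟩
    exact ⟨⟨fun h => absurd hzero h, fun h => absurd h hreach⟩, fun h => absurd h hreach⟩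
end

section
/- (Successor-witness characterization.) Let S ⊆ V and let Ã^{(S)} denote Ã with all columns outside S replaced by zero (i.e., Ã^{(S)} i s = Ã i s if s ∈ S and 0 otherwise). Let i, j ∈ V with j reachable from i and d := dist_G(i,j) ≥ 1. Then the coefficient of u^{d−1} in the (i,j) entry of the matrix product Ã^{(S)} * adj(1 − u·Ã) (over R[u]) is nonzero if and only if there exists s ∈ S with (i,s) ∈ E and dist_G(s,j) = d − 1, i.e., iff S contains a successor of i on a shortest path from i to j. In particular, taking S = V, the least degree of u occurring in the (i,j) entry of Ã * adj(1 − u·Ã) equals d − 1. -/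
section AuxWalk

variable {V : Type*}

lemma hasWalk_zero (E : Set (V × V)) (s j : V) : HasWalk E 0 s j ↔ s = j := by
  constructor
  · rintro ⟨v, h0, hl, -⟩
    rw [← h0, ← hl, Fin.last_zero]
  · rintro rfl
    exact ⟨fun _ => s, rfl, rfl, fun t => t.elim0⟩

lemma hasWalk_succ (E : Set (V × V)) (m : ℕ) (s j : V) :
    HasWalk E (m + 1) s j ↔ ∃ t, (s, t) ∈ E ∧ HasWalk E m t j := by
  constructor
  · rintro ⟨v, h0, hl, he⟩
    refine ⟨v 1, ?_, fun k => v k.succ, rfl, ?_, fun t => ?_⟩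
    · have h := he 0
      simp only [Fin.castSucc_zero, Fin.succ_zero_eq_one] at h
      rwa [h0] at h
    · show v (Fin.last m).succ = j
      rw [Fin.succ_last]
      exact hl
    · show (v t.castSucc.succ, v t.succ.succ) ∈ E
      rw [Fin.succ_castSucc]
      exact he t.succ
  · rintro ⟨t, ht, w, h0, hl, he⟩
    refine ⟨Fin.cases s w, ?_, ?_, fun k => ?_⟩
    · show (Fin.cases s w (0 : Fin (m + 2)) : V) = s
      rw [Fin.cases_zero]
    · show (Fin.cases s w (Fin.last (m + 1)) : V) = j
      rw [← Fin.succ_last, Fin.cases_succ]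
      exact hl
    · refine Fin.cases ?_ (fun k' => ?_) k
      · show ((Fin.cases s w ((0 : Fin (m + 1)).castSucc) : V),
            (Fin.cases s w ((0 : Fin (m + 1)).succ) : V)) ∈ E
        rw [Fin.castSucc_zero, Fin.cases_zero, Fin.cases_succ, h0]
        exact ht
      · show ((Fin.cases s w (k'.succ.castSucc) : V),
            (Fin.cases s w (k'.succ.succ) : V)) ∈ E
        rw [← Fin.succ_castSucc, Fin.cases_succ, Fin.cases_succ]
        exact he k'

end AuxWalk

section AuxMat

variable {V : Type*} [Fintype V] [DecidableEq V]

local notation "R" => MvPolynomial (V × V) ℤ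

lemma pow_entry_zero (E : Set (V × V)) [DecidablePred fun p => p ∈ E]
    (A : Matrix V V R)
    (hA : ∀ i j, A i j = if (i, j) ∈ E then MvPolynomial.X (i, j) else 0)
    (j : V) : ∀ (m : ℕ) (s : V), ¬ HasWalk E m s j → (A ^ m) s j = 0 := by
  intro m
  induction m with
  | zero =>
      intro s hs
      rw [pow_zero, Matrix.one_apply, if_neg]
      intro h
      exact hs ((hasWalk_zero E s j).2 h)
  | succ m ih =>
      intro s hs
      rw [pow_succ', Matrix.mul_apply]
      refine Finset.sum_eq_zero fun t _ => ?_
      by_cases ht : (s, t) ∈ E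
      · rw [ih t fun hw => hs ((hasWalk_succ E m s j).2 ⟨t, ht, hw⟩), mul_zero]
      · rw [hA s t, if_neg ht, zero_mul]

lemma eval_pow_nonneg (E : Set (V × V)) [DecidablePred fun p => p ∈ E]
    (A : Matrix V V R)
    (hA : ∀ i j, A i j = if (i, j) ∈ E then MvPolynomial.X (i, j) else 0)
    (j : V) : ∀ (m : ℕ) (s : V),
      0 ≤ MvPolynomial.eval (fun _ : V × V => (1 : ℤ)) ((A ^ m) s j) := by
  intro m
  induction m with
  | zero =>
      intro s
      rw [pow_zero, Matrix.one_apply]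
      split <;> simp
  | succ m ih =>
      intro s
      rw [pow_succ', Matrix.mul_apply, map_sum]
      refine Finset.sum_nonneg fun t _ => ?_
      rw [map_mul]
      refine mul_nonneg ?_ (ih t)
      rw [hA s t]
      split <;> simp

lemma eval_pow_pos (E : Set (V × V)) [DecidablePred fun p => p ∈ E]
    (A : Matrix V V R)
    (hA : ∀ i j, A i j = if (i, j) ∈ E then MvPolynomial.X (i, j) else 0)
    (j : V) : ∀ (m : ℕ) (s : V), HasWalk E m s j →
      0 < MvPolynomial.eval (fun _ : V × V => (1 : ℤ)) ((A ^ m) s j) := by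
  intro m
  induction m with
  | zero =>
      intro s hw
      obtain rfl := (hasWalk_zero E s j).1 hw
      rw [pow_zero, Matrix.one_apply_eq]
      simp
  | succ m ih =>
      intro s hw
      obtain ⟨t, ht, hwt⟩ := (hasWalk_succ E m s j).1 hw
      rw [pow_succ', Matrix.mul_apply, map_sum]
      refine Finset.sum_pos' (fun t' _ => ?_) ⟨t, Finset.mem_univ t, ?_⟩
      · rw [map_mul]
        refine mul_nonneg ?_ (eval_pow_nonneg E A hA j m t')
        rw [hA s t']
        split <;> simp
      · rw [map_mul, hA s t, if_pos ht, MvPolynomial.eval_X]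
        simpa using ih t hwt

lemma adjugate_eq_recur (A : Matrix V V R)
    (M : Matrix V V (Polynomial R))
    (hM : M = 1 - Matrix.of fun i j => Polynomial.X * Polynomial.C (A i j)) :
    M.adjugate = M.det • (1 : Matrix V V (Polynomial R)) +
      (Polynomial.X : Polynomial R) • (A.map Polynomial.C * M.adjugate) := by
  have hofs : (Matrix.of fun i j => Polynomial.X * Polynomial.C (A i j)) =
      (Polynomial.X : Polynomial R) • (A.map Polynomial.C) := by
    ext a b
    simp [Matrix.map_apply, smul_eq_mul]
  have hstep : M * M.adjugate =
      M.adjugate - (Polynomial.X : Polynomial R) • (A.map Polynomial.C * M.adjugate) := by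
    nth_rewrite 1 [hM]
    rw [hofs, Matrix.sub_mul, Matrix.one_mul, Matrix.smul_mul]
  have h := (hstep.symm.trans (Matrix.mul_adjugate M))
  rw [sub_eq_iff_eq_add] at h
  exact h

lemma det_coeff_zero_s3 (A : Matrix V V R)
    (M : Matrix V V (Polynomial R))
    (hM : M = 1 - Matrix.of fun i j => Polynomial.X * Polynomial.C (A i j)) :
    M.det.coeff 0 = 1 := by
  rw [Polynomial.coeff_zero_eq_eval_zero]
  have h1 : Polynomial.eval 0 M.det = ((Polynomial.evalRingHom (0 : R)).mapMatrix M).det :=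
    RingHom.map_det (Polynomial.evalRingHom (0 : R)) M
  rw [h1]
  have h2 : (Polynomial.evalRingHom (0 : R)).mapMatrix M = 1 := by
    rw [hM]
    ext a b
    by_cases hab : a = b <;>
      simp [RingHom.mapMatrix_apply, Matrix.map_apply, Matrix.sub_apply,
        Matrix.one_apply, hab]
  rw [h2, Matrix.det_one]

lemma coeff_adjugate (A : Matrix V V R)
    (M : Matrix V V (Polynomial R))
    (hM : M = 1 - Matrix.of fun i j => Polynomial.X * Polynomial.C (A i j))
    (j : V) : ∀ (k : ℕ) (s : V),
    (M.adjugate s j).coeff k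
      = ∑ m ∈ Finset.range (k + 1), (A ^ m) s j * M.det.coeff (k - m) := by
  have hrec : ∀ s : V, M.adjugate s j = M.det * ((1 : Matrix V V (Polynomial R)) s j) +
      Polynomial.X * ((A.map Polynomial.C * M.adjugate) s j) := by
    intro s
    have h := congrFun (congrFun (adjugate_eq_recur A M hM) s) j
    simpa [Matrix.add_apply, Matrix.smul_apply, smul_eq_mul] using h
  intro k
  induction k with
  | zero =>
      intro s
      rw [hrec s, Polynomial.coeff_add, Finset.sum_range_one, pow_zero,
        Polynomial.mul_coeff_zero, Polynomial.mul_coeff_zero, Polynomial.coeff_X_zero,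
        zero_mul, add_zero, Nat.sub_zero]
      by_cases hsj : s = j <;> simp [Matrix.one_apply, hsj, mul_comm]
  | succ k ih =>
      intro s
      rw [hrec s, Polynomial.coeff_add]
      have h1 : (M.det * ((1 : Matrix V V (Polynomial R)) s j)).coeff (k + 1)
          = ((1 : Matrix V V R) s j) * M.det.coeff (k + 1) := by
        by_cases hsj : s = j <;> simp [Matrix.one_apply, hsj, mul_comm]
      have h2 : (Polynomial.X * ((A.map Polynomial.C * M.adjugate) s j)).coeff (k + 1)
          = ∑ m ∈ Finset.range (k + 1), (A ^ (m + 1)) s j * M.det.coeff (k - m) := by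
        rw [Polynomial.coeff_X_mul, Matrix.mul_apply, Polynomial.finset_sum_coeff]
        have step1 : ∀ t ∈ Finset.univ,
            ((A.map Polynomial.C) s t * M.adjugate t j).coeff k
              = ∑ m ∈ Finset.range (k + 1), A s t * ((A ^ m) t j * M.det.coeff (k - m)) := by
          intro t _
          rw [Matrix.map_apply, Polynomial.coeff_C_mul, ih t, Finset.mul_sum]
        rw [Finset.sum_congr rfl step1, Finset.sum_comm]
        refine Finset.sum_congr rfl fun m _ => ?_
        rw [pow_succ', Matrix.mul_apply, Finset.sum_mul]
        exact Finset.sum_congr rfl fun t _ => by ring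
      rw [h1, h2]
      conv_rhs => rw [Finset.sum_range_succ']
      simp only [Nat.succ_sub_succ, pow_zero, Nat.sub_zero]
      exact add_comm _ _

/-- Coefficient of the adjugate entry vanishes when there is no short enough walk. -/
lemma adj_coeff_zero (E : Set (V × V)) [DecidablePred fun p => p ∈ E]
    (A : Matrix V V R)
    (hA : ∀ i j, A i j = if (i, j) ∈ E then MvPolynomial.X (i, j) else 0)
    (M : Matrix V V (Polynomial R))
    (hM : M = 1 - Matrix.of fun i j => Polynomial.X * Polynomial.C (A i j))
    (j : V) (k : ℕ) (s : V) (h : ∀ m, m ≤ k → ¬ HasWalk E m s j) :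
    (M.adjugate s j).coeff k = 0 := by
  rw [coeff_adjugate A M hM j k s]
  refine Finset.sum_eq_zero fun m hm => ?_
  rw [pow_entry_zero E A hA j m s (h m (by
    have := Finset.mem_range.1 hm; omega)), zero_mul]

lemma adj_coeff_dist (E : Set (V × V)) [DecidablePred fun p => p ∈ E]
    (A : Matrix V V R)
    (hA : ∀ i j, A i j = if (i, j) ∈ E then MvPolynomial.X (i, j) else 0)
    (M : Matrix V V (Polynomial R))
    (hM : M = 1 - Matrix.of fun i j => Polynomial.X * Polynomial.C (A i j))
    (j : V) (k : ℕ) (s : V) (h : ∀ m, m < k → ¬ HasWalk E m s j) :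
    (M.adjugate s j).coeff k = (A ^ k) s j := by
  rw [coeff_adjugate A M hM j k s, Finset.sum_range_succ, Finset.sum_eq_zero, zero_add,
    Nat.sub_self, det_coeff_zero_s3 A M hM, mul_one]
  intro m hm
  rw [pow_entry_zero E A hA j m s (h m (Finset.mem_range.1 hm)), zero_mul]

lemma prod_coeff (P : Matrix V V R) (M : Matrix V V (Polynomial R))
    (i j : V) (k : ℕ) :
    ((P.map Polynomial.C * M.adjugate) i j).coeff k
      = ∑ s, P i s * (M.adjugate s j).coeff k := by
  rw [Matrix.mul_apply, Polynomial.finset_sum_coeff]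
  exact Finset.sum_congr rfl fun s _ => by
    rw [Matrix.map_apply, Polynomial.coeff_C_mul]

/-- The main iff, stated for general `S`. -/
lemma aux_iff {V : Type*} [Fintype V] [DecidableEq V]
    (E : Set (V × V)) [DecidablePred fun p => p ∈ E]
    (S : Set V) [DecidablePred fun s => s ∈ S]
    (A AS : Matrix V V (MvPolynomial (V × V) ℤ))
    (hA : ∀ i j, A i j = if (i, j) ∈ E then MvPolynomial.X (i, j) else 0)
    (hAS : ∀ i s, AS i s = if s ∈ S then A i s else 0)
    (M : Matrix V V (Polynomial (MvPolynomial (V × V) ℤ)))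
    (hM : M = 1 - Matrix.of fun i j => Polynomial.X * Polynomial.C (A i j))
    (i j : V)
    (d : ℕ) (hd : d = sInf {d' : ℕ | HasWalk E d' i j}) :
    ((AS.map Polynomial.C * M.adjugate) i j).coeff (d - 1) ≠ 0 ↔
      ∃ s ∈ S, (i, s) ∈ E ∧ (∃ d', HasWalk E d' s j) ∧
        sInf {d' : ℕ | HasWalk E d' s j} = d - 1 := by
  classical
  set Good : V → Prop := fun s => s ∈ S ∧ (i, s) ∈ E ∧ (∃ d', HasWalk E d' s j) ∧
      sInf {d' : ℕ | HasWalk E d' s j} = d - 1 with hGood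
  have hterm : ∀ s, AS i s * (M.adjugate s j).coeff (d - 1)
      = if Good s then MvPolynomial.X (i, s) * (A ^ (d - 1)) s j else 0 := by
    intro s
    by_cases hs1 : s ∈ S
    swap
    · rw [hAS i s, if_neg hs1, zero_mul, if_neg (fun hg => hs1 hg.1)]
    by_cases hs2 : (i, s) ∈ E
    swap
    · rw [hAS i s, if_pos hs1, hA i s, if_neg hs2, zero_mul,
        if_neg (fun hg => hs2 hg.2.1)]
    have hASX : AS i s = MvPolynomial.X (i, s) := by
      rw [hAS i s, if_pos hs1, hA i s, if_pos hs2]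
    by_cases hs3 : ∃ d', HasWalk E d' s j
    · have hne : {d' : ℕ | HasWalk E d' s j}.Nonempty := hs3
      have hwDs : HasWalk E (sInf {d' : ℕ | HasWalk E d' s j}) s j := Nat.sInf_mem hne
      have hDge : d - 1 ≤ sInf {d' : ℕ | HasWalk E d' s j} := by
        have hw : HasWalk E (sInf {d' : ℕ | HasWalk E d' s j} + 1) i j :=
          (hasWalk_succ E _ i j).2 ⟨s, hs2, hwDs⟩
        have : d ≤ sInf {d' : ℕ | HasWalk E d' s j} + 1 := by
          rw [hd]; exact Nat.sInf_le hw
        omega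
      by_cases hs4 : sInf {d' : ℕ | HasWalk E d' s j} = d - 1
      · rw [if_pos ⟨hs1, hs2, hs3, hs4⟩, hASX,
          adj_coeff_dist E A hA M hM j (d - 1) s ?_]
        intro m hm hw
        have : sInf {d' : ℕ | HasWalk E d' s j} ≤ m := Nat.sInf_le hw
        omega
      · rw [if_neg (fun hg => hs4 hg.2.2.2),
          adj_coeff_zero E A hA M hM j (d - 1) s ?_, mul_zero]
        intro m hm hw
        have : sInf {d' : ℕ | HasWalk E d' s j} ≤ m := Nat.sInf_le hw
        omega
    · rw [if_neg (fun hg => hs3 hg.2.2.1),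
        adj_coeff_zero E A hA M hM j (d - 1) s (fun m _ hw => hs3 ⟨m, hw⟩), mul_zero]
  have hsum : ((AS.map Polynomial.C * M.adjugate) i j).coeff (d - 1)
      = ∑ s, if Good s then MvPolynomial.X (i, s) * (A ^ (d - 1)) s j else 0 := by
    rw [prod_coeff AS M i j (d - 1)]
    exact Finset.sum_congr rfl fun s _ => hterm s
  rw [hsum]
  constructor
  · intro h
    obtain ⟨s, -, hs⟩ := Finset.exists_ne_zero_of_sum_ne_zero h
    by_cases hg : Good s
    · exact ⟨s, hg.1, hg.2.1, hg.2.2.1, hg.2.2.2⟩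
    · exact absurd (if_neg hg) hs
  · rintro ⟨s₀, hs₀S, hs₀E, hs₀r, hs₀d⟩
    intro h0
    have hε := congrArg (MvPolynomial.eval (fun _ : V × V => (1 : ℤ))) h0
    rw [map_sum, map_zero] at hε
    have hpos : 0 < ∑ s, MvPolynomial.eval (fun _ : V × V => (1 : ℤ))
        (if Good s then MvPolynomial.X (i, s) * (A ^ (d - 1)) s j else 0) := by
      refine Finset.sum_pos' (fun s _ => ?_) ⟨s₀, Finset.mem_univ s₀, ?_⟩
      · by_cases hg : Good s
        · rw [if_pos hg, map_mul, MvPolynomial.eval_X]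
          simpa using eval_pow_nonneg E A hA j (d - 1) s
        · rw [if_neg hg, map_zero]
      · have hg : Good s₀ := ⟨hs₀S, hs₀E, hs₀r, hs₀d⟩
        rw [if_pos hg, map_mul, MvPolynomial.eval_X]
        have hw : HasWalk E (d - 1) s₀ j := by
          have hne' : {d' : ℕ | HasWalk E d' s₀ j}.Nonempty := hs₀r
          have hmem : sInf {d' : ℕ | HasWalk E d' s₀ j} ∈ {d' : ℕ | HasWalk E d' s₀ j} :=
            Nat.sInf_mem hne'
          rw [← hs₀d]
          exact hmem
        simpa using eval_pow_pos E A hA j (d - 1) s₀ hw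
    omega

end AuxMat

/-- Successor-witness characterization: with `Ã^{(S)}` denoting the symbolic adjacency matrix
with all columns outside `S` zeroed, and `d = dist_G(i,j) ≥ 1`, the coefficient of `u^{d-1}`
in the `(i,j)` entry of `Ã^{(S)} * adj(1 - u • Ã)` is nonzero iff `S` contains a successor of
`i` on a shortest path to `j`; in particular for `S = V` the trailing degree of the `(i,j)`
entry of `Ã * adj(1 - u • Ã)` equals `d - 1`. -/
theorem stmt3 {V : Type*} [Fintype V] [DecidableEq V] [Nonempty V]
    (E : Set (V × V)) [DecidablePred fun p => p ∈ E]
    (S : Set V) [DecidablePred fun s => s ∈ S]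
    (A AS : Matrix V V (MvPolynomial (V × V) ℤ))
    (hA : ∀ i j, A i j = if (i, j) ∈ E then MvPolynomial.X (i, j) else 0)
    (hAS : ∀ i s, AS i s = if s ∈ S then A i s else 0)
    (M : Matrix V V (Polynomial (MvPolynomial (V × V) ℤ)))
    (hM : M = 1 - Matrix.of fun i j => Polynomial.X * Polynomial.C (A i j))
    (i j : V) (hreach : ∃ d, HasWalk E d i j)
    (d : ℕ) (hd : d = sInf {d' : ℕ | HasWalk E d' i j}) (hd1 : 1 ≤ d) :
    (((AS.map Polynomial.C * M.adjugate) i j).coeff (d - 1) ≠ 0 ↔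
      ∃ s ∈ S, (i, s) ∈ E ∧ (∃ d', HasWalk E d' s j) ∧
        sInf {d' : ℕ | HasWalk E d' s j} = d - 1) ∧
    ((A.map Polynomial.C * M.adjugate) i j).trailingDegree = ((d - 1 : ℕ) : ℕ∞) := by
  classical
  refine ⟨aux_iff E S A AS hA hAS M hM i j d hd, ?_⟩
  -- the trailing-degree claim
  have hvanish : ∀ k, k < d - 1 → ((A.map Polynomial.C * M.adjugate) i j).coeff k = 0 := by
    intro k hk
    rw [prod_coeff A M i j k]
    refine Finset.sum_eq_zero fun s _ => ?_
    by_cases hsE : (i, s) ∈ E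
    · rw [adj_coeff_zero E A hA M hM j k s ?_, mul_zero]
      intro m hm hw
      have hw' : HasWalk E (m + 1) i j := (hasWalk_succ E m i j).2 ⟨s, hsE, hw⟩
      have : d ≤ m + 1 := by rw [hd]; exact Nat.sInf_le hw'
      omega
    · rw [hA i s, if_neg hsE, zero_mul]
  -- existence of a successor witness
  have hwd : HasWalk E d i j := by
    have hne' : {d' : ℕ | HasWalk E d' i j}.Nonempty := hreach
    have hmem : sInf {d' : ℕ | HasWalk E d' i j} ∈ {d' : ℕ | HasWalk E d' i j} :=
      Nat.sInf_mem hne'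
    rw [hd]
    exact hmem
  obtain ⟨t, htE, htw⟩ : ∃ t, (i, t) ∈ E ∧ HasWalk E (d - 1) t j := by
    have hd' : d = (d - 1) + 1 := by omega
    rw [hd'] at hwd
    exact (hasWalk_succ E (d - 1) i j).1 hwd
  have htr : ∃ d', HasWalk E d' t j := ⟨d - 1, htw⟩
  have htd : sInf {d' : ℕ | HasWalk E d' t j} = d - 1 := by
    refine le_antisymm (Nat.sInf_le htw) ?_
    by_contra hlt
    push_neg at hlt
    have hne' : {d' : ℕ | HasWalk E d' t j}.Nonempty := htr
    have hmem : sInf {d' : ℕ | HasWalk E d' t j} ∈ {d' : ℕ | HasWalk E d' t j} :=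
      Nat.sInf_mem hne'
    have hwi : HasWalk E (sInf {d' : ℕ | HasWalk E d' t j} + 1) i j :=
      (hasWalk_succ E _ i j).2 ⟨t, htE, hmem⟩
    have : d ≤ sInf {d' : ℕ | HasWalk E d' t j} + 1 := by
      rw [hd]; exact Nat.sInf_le hwi
    omega
  have hAuniv : ∀ i s, A i s = if s ∈ (Set.univ : Set V) then A i s else 0 := by
    intro i s; simp
  have hne : ((A.map Polynomial.C * M.adjugate) i j).coeff (d - 1) ≠ 0 :=
    (aux_iff E Set.univ A A hA hAuniv M hM i j d hd).2
      ⟨t, Set.mem_univ t, htE, htr, htd⟩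
  refine le_antisymm (Polynomial.trailingDegree_le_of_ne_zero hne) ?_
  refine Finset.le_min fun b hb => ?_
  have hcb : ((A.map Polynomial.C * M.adjugate) i j).coeff b ≠ 0 :=
    Polynomial.mem_support_iff.1 hb
  have hge : d - 1 ≤ b := by
    by_contra hb'
    exact hcb (hvanish b (by omega))
  exact WithTop.coe_le_coe.mpr hge
end

section
/- (Correctness of the lazy rank-one inverse update.) Let M be an invertible n×n matrix over F and let T, N be n×n matrices with M⁻¹ = T(I + N). Fix a scalar v ∈ F and indices i, j, and let b be the row vector defined by b_ℓ = v·(M⁻¹)_{jℓ} (i.e., b = v·e_jᵀM⁻¹). Assume 1 + b_i ≠ 0. Then I + e_i b is invertible with det(I + e_i b) = 1 + b_i; writing B := (I + e_i b)⁻¹ and N' := N·B + B − I, the matrix M' := M + v·e_i e_jᵀ is invertible, with (M')⁻¹ = T(I + N') and det M' = (1 + b_i)·det M. Moreover, every row of N' that is not identically zero is either a row index at which N is not identically zero, or the index i. -/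
/-- Correctness of the lazy rank-one inverse update: if `M⁻¹ = T(I + N)`, `b = v·e_jᵀM⁻¹`
and `1 + b i ≠ 0`, then `I + e_i b` is invertible with determinant `1 + b i`, and setting
`B = (I + e_i b)⁻¹`, `N' = N·B + B − I`, the matrix `M' = M + v·e_i e_jᵀ` is invertible with
`(M')⁻¹ = T(I + N')` and `det M' = (1 + b i)·det M`; moreover every nonzero row of `N'` is
either a nonzero row of `N` or the row `i`. -/
theorem stmt4 {n : Type*} [Fintype n] [DecidableEq n] {F : Type*} [Field F]
    (M T N : Matrix n n F) (hM : IsUnit M)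
    (hTN : M⁻¹ = T * (1 + N))
    (v : F) (i j : n)
    (b : n → F) (hb : ∀ ℓ, b ℓ = v * M⁻¹ j ℓ)
    (hbi : (1 : F) + b i ≠ 0)
    (Eib : Matrix n n F) (hEib : Eib = Matrix.vecMulVec (Pi.single i 1) b)
    (B : Matrix n n F) (hB : B = (1 + Eib)⁻¹)
    (N' : Matrix n n F) (hN' : N' = N * B + B - 1)
    (M' : Matrix n n F) (hM' : M' = M + v • Matrix.single i j 1) :
    IsUnit (1 + Eib) ∧ (1 + Eib).det = 1 + b i ∧
    IsUnit M' ∧ M'⁻¹ = T * (1 + N') ∧ M'.det = (1 + b i) * M.det ∧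
    ∀ p : n, (∃ q, N' p q ≠ 0) → (∃ q, N p q ≠ 0) ∨ p = i := by
  have hdet : (1 + Eib).det = 1 + b i := by
    rw [hEib, Matrix.vecMulVec_eq Unit, Matrix.det_one_add_replicateCol_mul_replicateRow]
    simp [dotProduct, Pi.single_apply, mul_ite]
  have hdet_unit : IsUnit (1 + Eib).det := by rw [hdet]; exact isUnit_iff_ne_zero.mpr hbi
  have hU : IsUnit (1 + Eib) := (Matrix.isUnit_iff_isUnit_det _).mpr hdet_unit
  set c : F := (1 + b i)⁻¹ with hc
  have hEsq : Eib * Eib = b i • Eib := by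
    ext p q
    simp only [hEib, Matrix.mul_apply, Matrix.vecMulVec_apply, Matrix.smul_apply, smul_eq_mul]
    rw [Finset.sum_eq_single i]
    · simp [Pi.single_apply]
    · intro k _ hk; simp [Pi.single_apply, hk]
    · simp
  have h0 : (1 : F) - c - c * b i = 0 := by rw [hc]; field_simp; ring
  have hright : (1 + Eib) * (1 - c • Eib) = 1 := by
    calc (1 + Eib) * (1 - c • Eib)
        = 1 + (1 - c - c * b i) • Eib := by
          simp only [Matrix.mul_sub, Matrix.mul_smul, Matrix.add_mul, Matrix.one_mul,
            Matrix.mul_one, hEsq, smul_smul]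
          module
      _ = 1 := by rw [h0, zero_smul, add_zero]
  have hBeq : B = 1 - c • Eib := by rw [hB, Matrix.inv_eq_right_inv hright]
  have hMinv : M⁻¹ * M = 1 := Matrix.nonsing_inv_mul M ((Matrix.isUnit_iff_isUnit_det M).mp hM)
  have hM'eq : M' = (1 + Eib) * M := by
    rw [hM', Matrix.add_mul, Matrix.one_mul]
    congr 1
    ext p q
    have h1 : (M⁻¹ * M) j q = (1 : Matrix n n F) j q := by rw [hMinv]
    simp only [Matrix.mul_apply, Matrix.one_apply] at h1
    simp only [hEib, Matrix.smul_apply, Matrix.single, Matrix.of_apply,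
      Matrix.mul_apply, Matrix.vecMulVec_apply, Pi.single_apply, hb, smul_eq_mul]
    by_cases hpi : p = i
    · subst hpi
      simp only [if_pos rfl, one_mul, mul_assoc, ← Finset.mul_sum, true_and]
      rw [h1]
      simp
    · have hni : ¬(i = p ∧ j = q) := fun h => hpi h.1.symm
      simp [hpi, hni]
  have hM'unit : IsUnit M' := by rw [hM'eq]; exact hU.mul hM
  have hM'inv : M'⁻¹ = T * (1 + N') := by
    rw [hM'eq, Matrix.mul_inv_rev, hTN, ← hB, hN']
    rw [show (1 : Matrix n n F) + (N * B + B - 1) = (1 + N) * B by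
      rw [Matrix.add_mul, Matrix.one_mul]; abel]
    rw [Matrix.mul_assoc]
  have hM'det : M'.det = (1 + b i) * M.det := by
    rw [hM'eq, Matrix.det_mul, hdet]
  refine ⟨hU, hdet, hM'unit, hM'inv, hM'det, ?_⟩
  rintro p ⟨q, hpq⟩
  by_cases hpi : p = i
  · exact Or.inr hpi
  refine Or.inl ?_
  by_contra hN0
  push_neg at hN0
  apply hpq
  have hB0 : ∀ r, B p r = (1 : Matrix n n F) p r := by
    intro r
    simp [hBeq, hEib, Matrix.vecMulVec_apply, Pi.single_apply, hpi]
  rw [hN', Matrix.sub_apply, Matrix.add_apply, Matrix.mul_apply, hB0 q]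
  simp [hN0]
end

section
/- Let A be an invertible square matrix over a commutative ring and let S be a set of row indices. If for every row index p ∉ S the p-th row of A equals the p-th row of the identity matrix, then for every row index p ∉ S the p-th row of A⁻¹ equals the p-th row of the identity matrix; that is, a matrix that differs from the identity only in the rows of S has an inverse that differs from the identity only in the rows of S. -/
/-- A matrix that differs from the identity only in the rows of `S` has an inverse that
differs from the identity only in the rows of `S`. -/
theorem stmt5 {n : Type*} [Fintype n] [DecidableEq n] {R : Type*} [CommRing R]
    (A : Matrix n n R) (hA : IsUnit A) (S : Set n)
    (h : ∀ p ∉ S, ∀ q, A p q = (1 : Matrix n n R) p q) :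
    ∀ p ∉ S, ∀ q, A⁻¹ p q = (1 : Matrix n n R) p q := by
  intro p hp q
  have hinv : A * A⁻¹ = 1 := Matrix.mul_nonsing_inv A ((Matrix.isUnit_iff_isUnit_det A).mp hA)
  have h2 : (A * A⁻¹) p q = A⁻¹ p q := by
    simp [Matrix.mul_apply, h p hp, Matrix.one_apply]
  rw [← h2, hinv]
end

section
/- For every natural number w and every real number p with 2^{−(w+1)} ≤ p ≤ 2^{−w}, one has 2^w · p · (1 − p)^{2^w − 1} ≥ 1/(2e). (This is the bound showing that when the number of witnesses c satisfies n/2^{w+1} ≤ c ≤ n/2^w, sampling 2^w columns independently with probability p = c/n isolates exactly one witness with probability at least 1/(2e).) -/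
/-- For every `w : ℕ` and real `p` with `2^{-(w+1)} ≤ p ≤ 2^{-w}`, one has
`2^w · p · (1 − p)^{2^w − 1} ≥ 1/(2e)`. -/
theorem stmt7 (w : ℕ) (p : ℝ)
    (h1 : ((2 : ℝ) ^ (w + 1))⁻¹ ≤ p) (h2 : p ≤ ((2 : ℝ) ^ w)⁻¹) :
    1 / (2 * Real.exp 1) ≤ (2 : ℝ) ^ w * p * (1 - p) ^ (2 ^ w - 1) := by
  have he : (1:ℝ) ≤ Real.exp 1 := by
    have := Real.add_one_le_exp (1:ℝ); linarith
  have hepos : (0:ℝ) < Real.exp 1 := Real.exp_pos 1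
  have hn : (0:ℝ) < (2:ℝ)^w := by positivity
  rcases Nat.eq_zero_or_pos w with hw | hw
  · subst hw
    simp only [pow_zero, pow_one] at *
    norm_num at h1 h2 ⊢
    have hi : (Real.exp 1)⁻¹ ≤ 1 := by
      rw [inv_le_one_iff₀]; right; exact he
    nlinarith
  · -- w ≥ 1
    set m : ℕ := 2 ^ w - 1 with hm
    have hNm : (m : ℝ) = (2:ℝ)^w - 1 := by
      rw [hm]
      push_cast [Nat.cast_sub (Nat.one_le_two_pow)]
      norm_num
    have hm1 : 1 ≤ m := by
      have : 2 ≤ 2 ^ w := Nat.one_lt_two_pow_iff.mpr (by omega)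
      omega
    have hmpos : (0:ℝ) < (m:ℝ) := by exact_mod_cast Nat.lt_of_lt_of_le Nat.zero_lt_one hm1
    -- 1 - 1/n ≥ 0 and ≤ 1 - p
    have hstep : 1 - ((2:ℝ)^w)⁻¹ ≤ 1 - p := by linarith
    have hbase0 : (0:ℝ) ≤ 1 - ((2:ℝ)^w)⁻¹ := by
      have : ((2:ℝ)^w)⁻¹ ≤ 1 := by
        rw [inv_le_one_iff₀]; right; exact one_le_pow₀ (by norm_num)
      linarith
    -- key: exp(-1/m) ≤ 1 - 1/n
    have hkey : Real.exp (-(1/(m:ℝ))) ≤ 1 - ((2:ℝ)^w)⁻¹ := by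
      have h1m : 1 + 1/(m:ℝ) ≤ Real.exp (1/(m:ℝ)) := by linarith [Real.add_one_le_exp (1/(m:ℝ))]
      have hxpos : (0:ℝ) < Real.exp (1/(m:ℝ)) := Real.exp_pos _
      rw [Real.exp_neg]
      rw [inv_le_iff_one_le_mul₀ hxpos] at *
      have hinv : ((2:ℝ)^w)⁻¹ = 1/((m:ℝ)+1) := by rw [hNm]; ring_nf
      rw [hinv]
      have : 1 - 1/((m:ℝ)+1) = (m:ℝ)/((m:ℝ)+1) := by field_simp; ring
      rw [this]
      have hmm : ((m:ℝ)+1) ≤ (m:ℝ) * Real.exp (1/(m:ℝ)) := by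
        calc (m:ℝ)+1 = (m:ℝ)*(1+1/(m:ℝ)) := by field_simp
          _ ≤ _ := mul_le_mul_of_nonneg_left h1m hmpos.le
      rw [div_mul_eq_mul_div, le_div_iff₀ (by positivity)]
      linarith
    -- so (1-p)^m ≥ exp(-1)
    have hpow : Real.exp (-1) ≤ (1 - p)^m := by
      have e1 : Real.exp (-1) = Real.exp (-(1/(m:ℝ)))^m := by
        rw [← Real.exp_nat_mul]
        congr 1
        field_simp
      rw [e1]
      calc Real.exp (-(1/(m:ℝ)))^m ≤ (1 - ((2:ℝ)^w)⁻¹)^m :=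
            pow_le_pow_left₀ (Real.exp_pos _).le hkey m
        _ ≤ (1 - p)^m := pow_le_pow_left₀ hbase0 hstep m
    -- n*p ≥ 1/2
    have hnp : (1:ℝ)/2 ≤ (2:ℝ)^w * p := by
      have h2n : ((2:ℝ)^(w+1)) = 2 * (2:ℝ)^w := by ring
      rw [h2n] at h1
      rw [mul_inv, inv_eq_one_div] at h1
      calc (1:ℝ)/2 = (2:ℝ)^w * (1/2 * ((2:ℝ)^w)⁻¹) := by field_simp
        _ ≤ (2:ℝ)^w * p := by
            apply mul_le_mul_of_nonneg_left h1 hn.le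
    have hexp : Real.exp (-1) = 1 / Real.exp 1 := by
      rw [Real.exp_neg]; exact inv_eq_one_div _
    calc 1 / (2 * Real.exp 1) = (1/2) * (1/Real.exp 1) := by ring
      _ ≤ ((2:ℝ)^w * p) * ((1-p)^m) := by
          apply mul_le_mul hnp (hexp ▸ hpow) (by positivity) (by positivity)
end

section
/- (Color-coding count.) Let V be a finite type, let k ≥ 1, and let v : ZMod k → V be an injective map (the vertices of a directed k-cycle, listed in cyclic order). The number of colorings χ : V → ZMod k such that there exists a rotation r ∈ ZMod k with χ(v(ℓ + r)) = ℓ for all ℓ ∈ ZMod k equals k · k^{|V| − k}. Equivalently, a uniformly random coloring of V with k colors makes the given k-cycle colorful (exactly one vertex of each color, in color order around the cycle) with probability exactly 1/k^{k−1}. -/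
/-- Color-coding count: if `v : ZMod k → V` lists the vertices of a directed `k`-cycle in
cyclic order (injectively), then the number of colorings `χ : V → ZMod k` for which some
rotation `r` satisfies `χ (v (ℓ + r)) = ℓ` for all `ℓ` equals `k * k^(|V| - k)`. -/
theorem stmt8 {V : Type*} [Fintype V] [DecidableEq V] (k : ℕ) [NeZero k]
    (v : ZMod k → V) (hv : Function.Injective v) :
    Fintype.card {χ : V → ZMod k // ∃ r : ZMod k, ∀ ℓ : ZMod k, χ (v (ℓ + r)) = ℓ}
      = k * k ^ (Fintype.card V - k) := by
  classical
  have key : ∀ (χ : V → ZMod k) (r : ZMod k), (∀ ℓ : ZMod k, χ (v (ℓ + r)) = ℓ) →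
      ∀ m : ZMod k, χ (v m) = m - r := by
    intro χ r h m
    have := h (m - r)
    rwa [sub_add_cancel] at this
  let e : {χ : V → ZMod k // ∃ r : ZMod k, ∀ ℓ : ZMod k, χ (v (ℓ + r)) = ℓ} ≃
      ZMod k × ({x : V // x ∉ Set.range v} → ZMod k) :=
    { toFun := fun χ => (-χ.1 (v 0), fun x => χ.1 x.1)
      invFun := fun p =>
        ⟨fun x => if h : ∃ m, v m = x then h.choose - p.1 else p.2 ⟨x, fun hx => h hx⟩,
          p.1, by
            intro ℓ
            have h : ∃ m, v m = v (ℓ + p.1) := ⟨ℓ + p.1, rfl⟩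
            simp only [dif_pos h]
            rw [hv h.choose_spec, add_sub_cancel_right]⟩
      left_inv := by
        rintro ⟨χ, r, hr⟩
        have hr0 : -χ (v 0) = r := by
          rw [key χ r hr 0, zero_sub, neg_neg]
        ext x
        simp only
        split_ifs with h
        · have hc := key χ r hr h.choose
          rw [h.choose_spec] at hc
          rw [hr0, ← hc]
        · rfl
      right_inv := by
        rintro ⟨r, f⟩
        have h0 : ∃ m, v m = v 0 := ⟨0, rfl⟩
        refine Prod.ext ?_ ?_
        · simp only [dif_pos h0]
          rw [hv h0.choose_spec, zero_sub, neg_neg]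
        · funext x
          simp only
          rw [dif_neg (fun h => x.2 ⟨h.choose, h.choose_spec⟩)] }
  rw [Fintype.card_congr e, Fintype.card_prod, Fintype.card_fun, ZMod.card,
    Fintype.card_subtype_compl]
  congr 1
  have h1 : Fintype.card {x : V // x ∈ Set.range v} = Fintype.card (Set.range v) :=
    Fintype.card_congr (Equiv.refl _)
  rw [h1, Set.card_range_of_injective hv, ZMod.card]
end

section
/- In the OMv gadget, there exists a walk from w₀ to w₁ of length at most 4 if and only if there exist indices j, k with u j, M j k, and v k (i.e., iff uᵀMv = 1); moreover, when this holds the distance from w₀ to w₁ equals 3, and when it fails every walk from w₀ to w₁ has length at least 5. -/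
/-- Vertices of the OMv gadget: `w₀`, `w₁`, the `a`-side and the `b`-side. -/
inductive OMvVert (n : ℕ) : Type
  | w0 : OMvVert n
  | w1 : OMvVert n
  | a : Fin n → OMvVert n
  | b : Fin n → OMvVert n

/-- One direction of each edge of the OMv gadget. -/
def omvRel (n : ℕ) (M : Fin n → Fin n → Prop) (u v : Fin n → Prop) :
    OMvVert n → OMvVert n → Prop := fun x y =>
  (∃ j, x = OMvVert.w0 ∧ y = OMvVert.a j ∧ u j) ∨
  (∃ j k, x = OMvVert.a j ∧ y = OMvVert.b k ∧ M j k) ∨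
  (∃ k, x = OMvVert.b k ∧ y = OMvVert.w1 ∧ v k)

/-- The OMv gadget graph. -/
def omvGraph (n : ℕ) (M : Fin n → Fin n → Prop) (u v : Fin n → Prop) :
    SimpleGraph (OMvVert n) :=
  SimpleGraph.fromRel (omvRel n M u v)

namespace OMvAux

def lvl {n : ℕ} : OMvVert n → ℤ
  | .w0 => 0
  | .a _ => 1
  | .b _ => 2
  | .w1 => 3

variable {n : ℕ} {M : Fin n → Fin n → Prop} {u v : Fin n → Prop}

lemma adj_lvl {x y : OMvVert n} (h : (omvGraph n M u v).Adj x y) :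
    lvl y = lvl x + 1 ∨ lvl y = lvl x - 1 := by
  rw [omvGraph, SimpleGraph.fromRel_adj] at h
  obtain ⟨-, h | h⟩ := h <;> unfold omvRel at h <;>
    rcases h with ⟨j, rfl, rfl, -⟩ | ⟨j, k, rfl, rfl, -⟩ | ⟨k, rfl, rfl, -⟩ <;>
    simp [lvl]

lemma walk_length {x y : OMvVert n} (p : (omvGraph n M u v).Walk x y) :
    ∃ m : ℕ, (p.length : ℤ) = lvl y - lvl x + 2 * m := by
  induction p with
  | nil => exact ⟨0, by simp⟩
  | cons h q ih =>
    obtain ⟨m, hm⟩ := ih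
    rcases adj_lvl h with h' | h'
    · exact ⟨m, by push_cast [SimpleGraph.Walk.length_cons, hm, h']; ring⟩
    · exact ⟨m + 1, by push_cast [SimpleGraph.Walk.length_cons, hm, h']; ring⟩

lemma adj_w0 {y : OMvVert n} (h : (omvGraph n M u v).Adj OMvVert.w0 y) :
    ∃ j, y = OMvVert.a j ∧ u j := by
  rw [omvGraph, SimpleGraph.fromRel_adj] at h
  obtain ⟨-, h | h⟩ := h <;> unfold omvRel at h <;>
    rcases h with ⟨j, h1, h2, h3⟩ | ⟨j, k, h1, h2, h3⟩ | ⟨k, h1, h2, h3⟩ <;>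
    first
      | exact ⟨j, h2, h3⟩
      | exact absurd h1 (by simp)
      | exact absurd h2 (by simp)

lemma adj_a {j : Fin n} {y : OMvVert n} (h : (omvGraph n M u v).Adj (OMvVert.a j) y) :
    (y = OMvVert.w0 ∧ u j) ∨ ∃ k, y = OMvVert.b k ∧ M j k := by
  rw [omvGraph, SimpleGraph.fromRel_adj] at h
  obtain ⟨-, h | h⟩ := h <;> unfold omvRel at h <;>
    rcases h with ⟨j', h1, h2, h3⟩ | ⟨j', k, h1, h2, h3⟩ | ⟨k, h1, h2, h3⟩
  · exact absurd h1 (by simp)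
  · obtain ⟨rfl⟩ := OMvVert.a.injEq .. ▸ h1
    exact Or.inr ⟨k, h2, h3⟩
  · exact absurd h1 (by simp)
  · obtain rfl : j' = j := by simpa using h2.symm
    exact Or.inl ⟨h1, h3⟩
  · exact absurd h2 (by simp)
  · exact absurd h2 (by simp)

lemma adj_b_w1 {k : Fin n} (h : (omvGraph n M u v).Adj (OMvVert.b k) OMvVert.w1) :
    v k := by
  rw [omvGraph, SimpleGraph.fromRel_adj] at h
  obtain ⟨-, h | h⟩ := h <;> unfold omvRel at h <;>
    rcases h with ⟨j', h1, h2, h3⟩ | ⟨j', k', h1, h2, h3⟩ | ⟨k', h1, h2, h3⟩ <;>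
    simp_all

lemma adj_of_rel {x y : OMvVert n} (hne : x ≠ y) (h : omvRel n M u v x y) :
    (omvGraph n M u v).Adj x y := by
  rw [omvGraph, SimpleGraph.fromRel_adj]
  exact ⟨hne, Or.inl h⟩

lemma walk3 {j k : Fin n} (hu : u j) (hM : M j k) (hv : v k) :
    ∃ p : (omvGraph n M u v).Walk OMvVert.w0 OMvVert.w1, p.length = 3 := by
  have h1 : (omvGraph n M u v).Adj OMvVert.w0 (OMvVert.a j) :=
    adj_of_rel (by simp) (Or.inl ⟨j, rfl, rfl, hu⟩)
  have h2 : (omvGraph n M u v).Adj (OMvVert.a j) (OMvVert.b k) :=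
    adj_of_rel (by simp) (Or.inr (Or.inl ⟨j, k, rfl, rfl, hM⟩))
  have h3 : (omvGraph n M u v).Adj (OMvVert.b k) OMvVert.w1 :=
    adj_of_rel (by simp) (Or.inr (Or.inr ⟨k, rfl, rfl, hv⟩))
  exact ⟨.cons h1 (.cons h2 (.cons h3 .nil)), rfl⟩

lemma triple_of_walk3 (p : (omvGraph n M u v).Walk OMvVert.w0 OMvVert.w1)
    (hl : p.length = 3) : ∃ j k, u j ∧ M j k ∧ v k := by
  cases p with
  | cons h1 q =>
    obtain ⟨j, rfl, hu⟩ := adj_w0 h1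
    cases q with
    | cons h2 r =>
      rcases adj_a h2 with ⟨rfl, -⟩ | ⟨k, rfl, hM⟩
      · obtain ⟨m, hm⟩ := walk_length r
        simp only [SimpleGraph.Walk.length_cons] at hl
        simp only [lvl] at hm
        omega
      · cases r with
        | cons h3 s =>
          cases s with
          | nil =>
            exact ⟨j, k, hu, hM, adj_b_w1 h3⟩
          | cons h4 t =>
            simp only [SimpleGraph.Walk.length_cons] at hl
            omega

end OMvAux

/-- In the OMv gadget, a walk from `w₀` to `w₁` of length at most 4 exists iff
`∃ j k, u j ∧ M j k ∧ v k`; moreover if this holds the distance from `w₀` to `w₁` is 3,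
and if it fails every walk from `w₀` to `w₁` has length at least 5. -/
theorem stmt9 (n : ℕ) (hn : 1 ≤ n) (M : Fin n → Fin n → Prop) (u v : Fin n → Prop) :
    ((∃ p : (omvGraph n M u v).Walk OMvVert.w0 OMvVert.w1, p.length ≤ 4) ↔
      ∃ j k, u j ∧ M j k ∧ v k) ∧
    ((∃ j k, u j ∧ M j k ∧ v k) →
      (omvGraph n M u v).dist OMvVert.w0 OMvVert.w1 = 3) ∧
    ((¬∃ j k, u j ∧ M j k ∧ v k) →
      ∀ p : (omvGraph n M u v).Walk OMvVert.w0 OMvVert.w1, 5 ≤ p.length) := by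
  refine ⟨⟨?_, ?_⟩, ?_, ?_⟩
  · rintro ⟨p, hp⟩
    obtain ⟨m, hm⟩ := OMvAux.walk_length p
    simp only [OMvAux.lvl] at hm
    exact OMvAux.triple_of_walk3 p (by omega)
  · rintro ⟨j, k, hu, hM, hv⟩
    obtain ⟨p, hp⟩ := OMvAux.walk3 hu hM hv
    exact ⟨p, by omega⟩
  · rintro ⟨j, k, hu, hM, hv⟩
    obtain ⟨p, hp⟩ := OMvAux.walk3 hu hM hv
    have hle : (omvGraph n M u v).dist OMvVert.w0 OMvVert.w1 ≤ 3 :=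
      hp ▸ SimpleGraph.dist_le p
    obtain ⟨q, hq⟩ := SimpleGraph.Reachable.exists_walk_length_eq_dist ⟨p⟩
    obtain ⟨m, hm⟩ := OMvAux.walk_length q
    simp only [OMvAux.lvl] at hm
    omega
  · intro h p
    obtain ⟨m, hm⟩ := OMvAux.walk_length p
    simp only [OMvAux.lvl] at hm
    rcases Nat.eq_zero_or_pos m with rfl | hm'
    · exact absurd (OMvAux.triple_of_walk3 p (by omega)) h
    · omega
end

section
/- In the chained OMv graph, the following are equivalent: (1) there exist indices j, k with u j, M j k, and v k; (2) there exists a walk from w₀ to w_c of length at most 5c − 1. Moreover, if (1) holds then the distance from w₀ to w_c equals 3c, and if (1) fails then every walk from w₀ to w_c has length at least 5c. -/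
/-- Vertices of the chained OMv graph: `w₀,…,w_c` and, for each of the `c` gadget copies,
the `a`-side and `b`-side vertices. -/
inductive ChainVert (n c : ℕ) : Type
  | w : Fin (c + 1) → ChainVert n c
  | a : Fin c → Fin n → ChainVert n c
  | b : Fin c → Fin n → ChainVert n c

/-- One direction of each edge of the chained OMv graph: gadget copy `ℓ : Fin c` plays the
role of `Γ_{ℓ+1}`, so its `a`-side is joined to `w_ℓ` and its `b`-side to `w_{ℓ+1}`. -/
def chainRel (n c : ℕ) (M : Fin n → Fin n → Prop) (u v : Fin n → Prop) :
    ChainVert n c → ChainVert n c → Prop := fun x y =>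
  (∃ ℓ j k, x = ChainVert.a ℓ j ∧ y = ChainVert.b ℓ k ∧ M j k) ∨
  (∃ (ℓ : Fin c) (j : Fin n), x = ChainVert.w ℓ.castSucc ∧ y = ChainVert.a ℓ j ∧ u j) ∨
  (∃ (ℓ : Fin c) (k : Fin n), x = ChainVert.b ℓ k ∧ y = ChainVert.w ℓ.succ ∧ v k)

/-- The chained OMv graph. -/
def chainGraph (n c : ℕ) (M : Fin n → Fin n → Prop) (u v : Fin n → Prop) :
    SimpleGraph (ChainVert n c) :=
  SimpleGraph.fromRel (chainRel n c M u v)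

open scoped Classical

/-- Potential with step 3 per gadget. -/
def chainPot1 {n c : ℕ} : ChainVert n c → ℤ
  | .w i => 3 * i.val
  | .a ℓ _ => 3 * ℓ.val + 1
  | .b ℓ _ => 3 * ℓ.val + 2

/-- Potential with step 5 per gadget (used when no good triple exists). -/
noncomputable def chainPot2 {n c : ℕ} (u v : Fin n → Prop) : ChainVert n c → ℤ
  | .w i => 5 * i.val
  | .a ℓ j => 5 * ℓ.val + (if u j then 1 else 3)
  | .b ℓ k => 5 * ℓ.val + (if v k then 4 else 2)

lemma chain_walk_pot {V : Type*} {G : SimpleGraph V} (f : V → ℤ)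
    (hf : ∀ x y, G.Adj x y → |f y - f x| ≤ 1) :
    ∀ {x y : V} (p : G.Walk x y), |f y - f x| ≤ (p.length : ℤ) := by
  intro x y p
  induction p with
  | nil => simp
  | @cons x y z h q ih =>
    have h1 := hf x y h
    have : |f z - f x| ≤ |f z - f y| + |f y - f x| := by
      have := abs_sub_abs_le_abs_sub (f z - f x) (f y - f x)
      calc |f z - f x| = |(f z - f y) + (f y - f x)| := by ring_nf
        _ ≤ |f z - f y| + |f y - f x| := abs_add_le _ _
    simp only [SimpleGraph.Walk.length_cons]
    push_cast
    omega

lemma chainPot1_adj {n c : ℕ} {M : Fin n → Fin n → Prop} {u v : Fin n → Prop}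
    {x y : ChainVert n c} (h : (chainGraph n c M u v).Adj x y) :
    |chainPot1 y - chainPot1 x| ≤ 1 := by
  rw [chainGraph, SimpleGraph.fromRel_adj] at h
  obtain ⟨-, h | h⟩ := h
  all_goals {
    rcases h with ⟨ℓ, j, k, rfl, rfl, -⟩ | ⟨ℓ, j, rfl, rfl, -⟩ | ⟨ℓ, k, rfl, rfl, -⟩ <;>
    · simp only [chainPot1, Fin.coe_castSucc, Fin.val_succ]
      push_cast
      rw [abs_le]
      omega }

lemma chainPot2_adj {n c : ℕ} {M : Fin n → Fin n → Prop} {u v : Fin n → Prop}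
    (htr : ¬∃ j k, u j ∧ M j k ∧ v k)
    {x y : ChainVert n c} (h : (chainGraph n c M u v).Adj x y) :
    |chainPot2 u v y - chainPot2 u v x| ≤ 1 := by
  rw [chainGraph, SimpleGraph.fromRel_adj] at h
  obtain ⟨-, h | h⟩ := h
  all_goals {
    rcases h with ⟨ℓ, j, k, rfl, rfl, hM⟩ | ⟨ℓ, j, rfl, rfl, hu⟩ | ⟨ℓ, k, rfl, rfl, hv⟩
    · have : ¬(u j ∧ v k) := fun ⟨hu, hv⟩ => htr ⟨j, k, hu, hM, hv⟩
      simp only [chainPot2]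
      by_cases hu : u j <;> by_cases hv : v k <;>
        simp_all <;> rw [abs_le] <;> constructor <;> push_cast <;> omega
    · simp only [chainPot2, Fin.coe_castSucc, if_pos hu]
      rw [abs_le]; constructor <;> push_cast <;> omega
    · simp only [chainPot2, Fin.val_succ, if_pos hv]
      rw [abs_le]; constructor <;> push_cast <;> omega }

/-- Construction of the short walk when a good triple exists. -/
lemma chain_walk_exists {n c : ℕ} {M : Fin n → Fin n → Prop} {u v : Fin n → Prop}
    {j k : Fin n} (hu : u j) (hM : M j k) (hv : v k) :
    ∀ (m : ℕ) (i : Fin (c + 1)), i.val + m = c →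
      ∃ p : (chainGraph n c M u v).Walk (ChainVert.w i) (ChainVert.w (Fin.last c)),
        p.length = 3 * m := by
  intro m
  induction m with
  | zero =>
    intro i hi
    have : i = Fin.last c := Fin.ext (by simpa using hi)
    subst this
    exact ⟨SimpleGraph.Walk.nil, rfl⟩
  | succ m ih =>
    intro i hi
    have hlt : i.val < c := by omega
    set ℓ : Fin c := ⟨i.val, hlt⟩ with hℓ
    have hcs : ℓ.castSucc = i := Fin.ext rfl
    have h1 : (chainGraph n c M u v).Adj (ChainVert.w i) (ChainVert.a ℓ j) := by
      rw [chainGraph, SimpleGraph.fromRel_adj]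
      exact ⟨(fun h => nomatch h),
        Or.inl (Or.inr (Or.inl ⟨ℓ, j, by rw [hcs], rfl, hu⟩))⟩
    have h2 : (chainGraph n c M u v).Adj (ChainVert.a ℓ j) (ChainVert.b ℓ k) := by
      rw [chainGraph, SimpleGraph.fromRel_adj]
      exact ⟨(fun h => nomatch h),
        Or.inl (Or.inl ⟨ℓ, j, k, rfl, rfl, hM⟩)⟩
    have h3 : (chainGraph n c M u v).Adj (ChainVert.b ℓ k) (ChainVert.w ℓ.succ) := by
      rw [chainGraph, SimpleGraph.fromRel_adj]
      exact ⟨(fun h => nomatch h),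
        Or.inl (Or.inr (Or.inr ⟨ℓ, k, rfl, rfl, hv⟩))⟩
    obtain ⟨q, hq⟩ := ih ℓ.succ (by simp [Fin.val_succ, hℓ]; omega)
    exact ⟨(SimpleGraph.Walk.cons h1 (SimpleGraph.Walk.cons h2
      (SimpleGraph.Walk.cons h3 q))), by simp [hq]; ring⟩

/-- In the chained OMv graph: a walk from `w₀` to `w_c` of length at most `5c − 1` exists iff
`∃ j k, u j ∧ M j k ∧ v k`; if this holds the distance from `w₀` to `w_c` is `3c`, and if it
fails every walk from `w₀` to `w_c` has length at least `5c`. -/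
theorem stmt10 (n c : ℕ) (hn : 1 ≤ n) (hc : 1 ≤ c)
    (M : Fin n → Fin n → Prop) (u v : Fin n → Prop) :
    ((∃ p : (chainGraph n c M u v).Walk (ChainVert.w 0) (ChainVert.w (Fin.last c)),
        p.length ≤ 5 * c - 1) ↔
      ∃ j k, u j ∧ M j k ∧ v k) ∧
    ((∃ j k, u j ∧ M j k ∧ v k) →
      (chainGraph n c M u v).dist (ChainVert.w 0) (ChainVert.w (Fin.last c)) = 3 * c) ∧
    ((¬∃ j k, u j ∧ M j k ∧ v k) →
      ∀ p : (chainGraph n c M u v).Walk (ChainVert.w 0) (ChainVert.w (Fin.last c)),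
        5 * c ≤ p.length) := by
  -- lower bound 3c for any walk
  have lb3 : ∀ p : (chainGraph n c M u v).Walk (ChainVert.w 0) (ChainVert.w (Fin.last c)),
      3 * c ≤ p.length := by
    intro p
    have key := (le_abs_self _).trans
      (chain_walk_pot chainPot1 (fun x y h => chainPot1_adj h) p)
    simp only [chainPot1, Fin.val_last, Fin.val_zero, Nat.cast_zero, mul_zero, sub_zero] at key
    exact_mod_cast key
  -- lower bound 5c for any walk when no good triple exists
  have lb5 : (¬∃ j k, u j ∧ M j k ∧ v k) →
      ∀ p : (chainGraph n c M u v).Walk (ChainVert.w 0) (ChainVert.w (Fin.last c)),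
      5 * c ≤ p.length := by
    intro htr p
    have key := (le_abs_self _).trans
      (chain_walk_pot (chainPot2 u v) (fun x y h => chainPot2_adj htr h) p)
    simp only [chainPot2, Fin.val_last, Fin.val_zero, Nat.cast_zero, mul_zero, sub_zero] at key
    exact_mod_cast key
  -- existence of walk of length 3c given a good triple
  have ex3 : (∃ j k, u j ∧ M j k ∧ v k) →
      ∃ p : (chainGraph n c M u v).Walk (ChainVert.w 0) (ChainVert.w (Fin.last c)),
      p.length = 3 * c := by
    rintro ⟨j, k, hu, hM, hv⟩
    exact chain_walk_exists hu hM hv c 0 (by simp)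
  refine ⟨⟨?_, ?_⟩, ?_, fun htr p => lb5 htr p⟩
  · rintro ⟨p, hp⟩
    by_contra htr
    have := lb5 htr p
    omega
  · intro htr
    obtain ⟨p, hp⟩ := ex3 htr
    exact ⟨p, by omega⟩
  · intro htr
    obtain ⟨p, hp⟩ := ex3 htr
    refine le_antisymm (hp ▸ SimpleGraph.dist_le p) ?_
    obtain ⟨q, hq⟩ := p.reachable.exists_walk_length_eq_dist
    have := lb3 q
    omega
end

section
/- (Correctness of the incremental OMv construction at the end of phase i.) In the graph G_i, there exists a walk from the vertex z_1 of P_0 to the vertex y_1 of P_{β+1} of length strictly less than 4(β+1) + (β+2)(2n−2i) + 2(i−1) if and only if there exist indices j, k with u^i j, M j k, and v^i k. -/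
/-- Vertices of the incremental OMv graph: `β+2` paths `P_0,…,P_{β+1}`, each with `2n−1`
vertices (path vertex `t` of `P_ℓ` is `z_{t+1}` for `t ≤ n−1` and `y_{2n−1−t}` in general,
so `z_s` has index `s−1` and `y_s` has index `2n−1−s`), together with `β+1` gadget copies
`Γ_1,…,Γ_{β+1}` (copy `ℓ : Fin (β+1)` plays the role of `Γ_{ℓ+1}`). -/
inductive IncVert (n β : ℕ) : Type
  | p : Fin (β + 2) → Fin (2 * n - 1) → IncVert n β
  | a : Fin (β + 1) → Fin n → IncVert n β
  | b : Fin (β + 1) → Fin n → IncVert n β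

/-- One direction of each edge of the incremental OMv graph after phase `i`:
consecutive path edges; gadget edges `{a_j^ℓ, b_k^ℓ}` iff `M j k`; and, for each phase
`1 ≤ s ≤ i`, edges `{y_s of P_{ℓ−1}, a_j^ℓ}` iff `u^s j` and `{b_k^ℓ, z_s of P_ℓ}` iff
`v^s k`. -/
def incRel (n β i : ℕ) (M : Fin n → Fin n → Prop) (u v : ℕ → Fin n → Prop) :
    IncVert n β → IncVert n β → Prop := fun x y =>
  (∃ (ℓ : Fin (β + 2)) (t₁ t₂ : Fin (2 * n - 1)),
    x = IncVert.p ℓ t₁ ∧ y = IncVert.p ℓ t₂ ∧ (t₁ : ℕ) + 1 = (t₂ : ℕ)) ∨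
  (∃ (ℓ : Fin (β + 1)) (j k : Fin n), x = IncVert.a ℓ j ∧ y = IncVert.b ℓ k ∧ M j k) ∨
  (∃ (s : ℕ) (ℓ : Fin (β + 1)) (j : Fin n) (t : Fin (2 * n - 1)),
    1 ≤ s ∧ s ≤ i ∧ (t : ℕ) = 2 * n - 1 - s ∧
    x = IncVert.p ℓ.castSucc t ∧ y = IncVert.a ℓ j ∧ u s j) ∨
  (∃ (s : ℕ) (ℓ : Fin (β + 1)) (k : Fin n) (t : Fin (2 * n - 1)),
    1 ≤ s ∧ s ≤ i ∧ (t : ℕ) = s - 1 ∧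
    x = IncVert.b ℓ k ∧ y = IncVert.p ℓ.succ t ∧ v s k)

/-- The incremental OMv graph `G_i` at the end of phase `i`. -/
def incGraph (n β i : ℕ) (M : Fin n → Fin n → Prop) (u v : ℕ → Fin n → Prop) :
    SimpleGraph (IncVert n β) :=
  SimpleGraph.fromRel (incRel n β i M u v)

namespace IncProof

/-- base potential of path `ℓ` -/
def bse (n i : ℕ) (ℓ : ℕ) : ℤ := (i : ℤ) - 1 + (ℓ : ℤ) * (2 * (n : ℤ) - 2 * i + 4)

/-- clamped offset along path `ℓ` -/
def eTrm (n β i : ℕ) (ℓ : ℕ) (t : ℕ) : ℤ :=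
  if ℓ = 0 then min ((t : ℤ) - ((i : ℤ) - 1)) (2 * (n : ℤ) - 2 * i + 1)
  else if ℓ = β + 1 then max ((t : ℤ) - ((i : ℤ) - 1)) (-1)
  else max (min ((t : ℤ) - ((i : ℤ) - 1)) (2 * (n : ℤ) - 2 * i + 1)) (-1)

open Classical in
noncomputable def pot (n β i : ℕ) (u v : ℕ → Fin n → Prop) : IncVert n β → ℤ
  | .p ℓ t => bse n i (ℓ : ℕ) + eTrm n β i (ℓ : ℕ) (t : ℕ)
  | .a ℓ j => bse n i (ℓ : ℕ) + (2 * (n : ℤ) - 2 * i) + (if u i j then 1 else 2)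
  | .b ℓ k => bse n i (ℓ : ℕ) + (2 * (n : ℤ) - 2 * i) + (if v i k then 3 else 2)

variable {n β i : ℕ} {M : Fin n → Fin n → Prop} {u v : ℕ → Fin n → Prop}

lemma pot_rel (hi1 : 1 ≤ i) (hin : i ≤ n)
    (hno : ∀ j k, ¬(u i j ∧ M j k ∧ v i k)) {x y : IncVert n β}
    (h : incRel n β i M u v x y) :
    pot n β i u v y ≤ pot n β i u v x + 1 ∧ pot n β i u v x ≤ pot n β i u v y + 1 := by
  classical
  rcases h with ⟨ℓ, t₁, t₂, rfl, rfl, ht⟩ | ⟨ℓ, j, k, rfl, rfl, hM⟩ |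
    ⟨s, ℓ, j, t, hs1, hsi, ht, rfl, rfl, hu⟩ | ⟨s, ℓ, k, t, hs1, hsi, ht, rfl, rfl, hv⟩
  · -- path edge
    simp only [pot]
    have h2 : eTrm n β i (ℓ : ℕ) (t₂ : ℕ) ≤ eTrm n β i (ℓ : ℕ) (t₁ : ℕ) + 1 ∧
        eTrm n β i (ℓ : ℕ) (t₁ : ℕ) ≤ eTrm n β i (ℓ : ℕ) (t₂ : ℕ) + 1 := by
      unfold eTrm
      split_ifs <;> constructor <;>
        simp only [min_def, max_def] <;> split_ifs <;> omega
    constructor <;> linarith [h2.1, h2.2]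
  · -- gadget edge a-b
    simp only [pot]
    by_cases hui : u i j <;> by_cases hvk : v i k
    · exact absurd ⟨hui, hM, hvk⟩ (hno j k)
    · simp only [if_pos hui, if_neg hvk]; constructor <;> linarith
    · simp only [if_neg hui, if_pos hvk]; constructor <;> linarith
    · simp only [if_neg hui, if_neg hvk]; constructor <;> linarith
  · -- y-a edge
    simp only [pot, Fin.coe_castSucc]
    have hlt : (ℓ : ℕ) < β + 1 := ℓ.isLt
    have he : eTrm n β i (ℓ : ℕ) (t : ℕ) =
        min ((t : ℤ) - ((i : ℤ) - 1)) (2 * (n : ℤ) - 2 * i + 1) := by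
      unfold eTrm
      split_ifs with h1 h2
      · rfl
      · omega
      · rw [max_eq_left (le_min (by omega) (by omega))]
    rw [he]
    have htz : (t : ℤ) = 2 * (n : ℤ) - 1 - s := by omega
    rcases eq_or_ne s i with rfl | hsne
    · rw [min_eq_left (by omega), if_pos hu]
      constructor <;> linarith
    · rw [min_eq_right (by omega)]
      split_ifs <;> constructor <;> linarith
  · -- b-z edge
    simp only [pot, Fin.val_succ]
    have hbse : bse n i ((ℓ : ℕ) + 1) = bse n i (ℓ : ℕ) + (2 * (n : ℤ) - 2 * i + 4) := by
      unfold bse; push_cast; ring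
    have he : eTrm n β i ((ℓ : ℕ) + 1) (t : ℕ) = max ((t : ℤ) - ((i : ℤ) - 1)) (-1) := by
      rw [eTrm, if_neg (by omega : ¬((ℓ : ℕ) + 1 = 0))]
      rcases eq_or_ne ((ℓ : ℕ) + 1) (β + 1) with h2 | h2
      · rw [if_pos h2]
      · rw [if_neg h2, min_eq_left (by omega)]
    rw [he, hbse]
    have htz : (t : ℤ) = (s : ℤ) - 1 := by omega
    rcases eq_or_ne s i with rfl | hsne
    · rw [max_eq_left (by omega), if_pos hv]
      constructor <;> linarith
    · rw [max_eq_right (by omega)]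
      split_ifs <;> constructor <;> linarith

lemma pot_adj (hi1 : 1 ≤ i) (hin : i ≤ n)
    (hno : ∀ j k, ¬(u i j ∧ M j k ∧ v i k)) :
    ∀ ⦃x y : IncVert n β⦄, (incGraph n β i M u v).Adj x y →
      pot n β i u v y ≤ pot n β i u v x + 1 := by
  intro x y hxy
  rw [incGraph, SimpleGraph.fromRel_adj] at hxy
  rcases hxy with ⟨-, h | h⟩
  · exact (pot_rel hi1 hin hno h).1
  · exact (pot_rel hi1 hin hno h).2

lemma walk_pot {V : Type*} {G : SimpleGraph V} (φ : V → ℤ)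
    (h : ∀ ⦃x y⦄, G.Adj x y → φ y ≤ φ x + 1) {x y : V} (w : G.Walk x y) :
    φ y ≤ φ x + w.length := by
  induction w with
  | nil => simp
  | cons hadj w ih =>
      have := h hadj
      simp only [SimpleGraph.Walk.length_cons]
      push_cast
      linarith

end IncProof

namespace IncProof

variable {n β i : ℕ} {M : Fin n → Fin n → Prop} {u v : ℕ → Fin n → Prop}

lemma adj_path (ℓ : Fin (β + 2)) (t₁ t₂ : Fin (2 * n - 1)) (h : (t₁ : ℕ) + 1 = t₂) :
    (incGraph n β i M u v).Adj (.p ℓ t₁) (.p ℓ t₂) := by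
  rw [incGraph, SimpleGraph.fromRel_adj]
  refine ⟨?_, Or.inl (Or.inl ⟨ℓ, t₁, t₂, rfl, rfl, h⟩)⟩
  intro hc
  rw [IncVert.p.injEq] at hc
  have := congrArg Fin.val hc.2
  omega

lemma adj_ya (hi1 : 1 ≤ i) (ℓ : Fin (β + 1)) {j : Fin n} (t : Fin (2 * n - 1))
    (ht : (t : ℕ) = 2 * n - 1 - i) (hu : u i j) :
    (incGraph n β i M u v).Adj (.p ℓ.castSucc t) (.a ℓ j) := by
  rw [incGraph, SimpleGraph.fromRel_adj]
  exact ⟨(fun h => nomatch h),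
    Or.inl (Or.inr (Or.inr (Or.inl ⟨i, ℓ, j, t, hi1, le_refl i, ht, rfl, rfl, hu⟩)))⟩

lemma adj_ab (ℓ : Fin (β + 1)) {j k : Fin n} (hM : M j k) :
    (incGraph n β i M u v).Adj (.a ℓ j) (.b ℓ k) := by
  rw [incGraph, SimpleGraph.fromRel_adj]
  exact ⟨(fun h => nomatch h), Or.inl (Or.inr (Or.inl ⟨ℓ, j, k, rfl, rfl, hM⟩))⟩

lemma adj_bz (hi1 : 1 ≤ i) (ℓ : Fin (β + 1)) {k : Fin n} (t : Fin (2 * n - 1))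
    (ht : (t : ℕ) = i - 1) (hv : v i k) :
    (incGraph n β i M u v).Adj (.b ℓ k) (.p ℓ.succ t) := by
  rw [incGraph, SimpleGraph.fromRel_adj]
  exact ⟨(fun h => nomatch h),
    Or.inl (Or.inr (Or.inr (Or.inr ⟨i, ℓ, k, t, hi1, le_refl i, ht, rfl, rfl, hv⟩)))⟩

lemma walk_seg (hn : 1 ≤ n) (ℓ : Fin (β + 2)) :
    ∀ (d t : ℕ), (h : t + d ≤ 2 * n - 2) →
    ∃ w : (incGraph n β i M u v).Walk (.p ℓ ⟨t, by omega⟩) (.p ℓ ⟨t + d, by omega⟩),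
      w.length = d := by
  intro d
  induction d with
  | zero => exact fun t h => ⟨SimpleGraph.Walk.nil, rfl⟩
  | succ d ih =>
      intro t h
      obtain ⟨w, hw⟩ := ih t (by omega)
      refine ⟨w.concat (adj_path ℓ ⟨t + d, by omega⟩ ⟨t + d + 1, by omega⟩ rfl), ?_⟩
      rw [SimpleGraph.Walk.length_concat, hw]

lemma walk_seg' (hn : 1 ≤ n) (ℓ : Fin (β + 2)) (t₁ t₂ : ℕ) (h1 : t₁ ≤ t₂)
    (h2 : t₂ ≤ 2 * n - 2) :
    ∃ w : (incGraph n β i M u v).Walk (.p ℓ ⟨t₁, by omega⟩) (.p ℓ ⟨t₂, by omega⟩),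
      w.length = t₂ - t₁ := by
  obtain ⟨w, hw⟩ := walk_seg (i := i) (M := M) (u := u) (v := v) hn ℓ (t₂ - t₁) t₁ (by omega)
  refine ⟨w.copy rfl ?_, by rw [SimpleGraph.Walk.length_copy, hw]⟩
  congr 1
  simp only [Fin.mk.injEq]
  omega

lemma chain (hn : 1 ≤ n) (hi1 : 1 ≤ i) (hin : i ≤ n) {j k : Fin n}
    (hu : u i j) (hM : M j k) (hv : v i k) :
    ∀ (r ℓ : ℕ), (hℓ : ℓ + r = β) →
    ∃ w : (incGraph n β i M u v).Walk (.p ⟨ℓ, by omega⟩ ⟨2 * n - 1 - i, by omega⟩)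
        (.p (Fin.last (β + 1)) ⟨2 * n - 2, by omega⟩),
      w.length = (r + 1) * (2 * n - 2 * i + 3) + (i - 1) := by
  intro r
  induction r with
  | zero =>
      intro ℓ hℓ
      have hℓβ : ℓ + 1 < β + 2 := by omega
      obtain ⟨w, hw⟩ := walk_seg' (i := i) (M := M) (u := u) (v := v) hn
        ⟨ℓ + 1, hℓβ⟩ (i - 1) (2 * n - 2) (by omega) (by omega)
      have hv2 : (IncVert.p (⟨ℓ + 1, hℓβ⟩ : Fin (β + 2)) ⟨2 * n - 2, by omega⟩ : IncVert n β)
          = .p (Fin.last (β + 1)) ⟨2 * n - 2, by omega⟩ := by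
        congr 1
        exact Fin.ext (by simp [Fin.val_last]; omega)
      refine ⟨(SimpleGraph.Walk.cons (adj_ya hi1 ⟨ℓ, by omega⟩ ⟨2 * n - 1 - i, by omega⟩ rfl hu)
        (.cons (adj_ab ⟨ℓ, by omega⟩ hM)
          (.cons (adj_bz hi1 ⟨ℓ, by omega⟩ ⟨i - 1, by omega⟩ rfl hv) w))).copy rfl hv2, ?_⟩
      simp only [SimpleGraph.Walk.length_copy, SimpleGraph.Walk.length_cons, hw]
      omega
  | succ r ih =>
      intro ℓ hℓ
      have hℓβ : ℓ + 1 < β + 2 := by omega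
      obtain ⟨w1, hw1⟩ := walk_seg' (i := i) (M := M) (u := u) (v := v) hn
        ⟨ℓ + 1, hℓβ⟩ (i - 1) (2 * n - 1 - i) (by omega) (by omega)
      obtain ⟨w2, hw2⟩ := ih (ℓ + 1) (by omega)
      refine ⟨.cons (adj_ya hi1 ⟨ℓ, by omega⟩ ⟨2 * n - 1 - i, by omega⟩ rfl hu)
        (.cons (adj_ab ⟨ℓ, by omega⟩ hM)
          (.cons (adj_bz hi1 ⟨ℓ, by omega⟩ ⟨i - 1, by omega⟩ rfl hv) (w1.append w2))), ?_⟩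
      simp only [SimpleGraph.Walk.length_cons, SimpleGraph.Walk.length_append, hw1, hw2]
      have hexp : (r + 1 + 1) * (2 * n - 2 * i + 3)
          = (r + 1) * (2 * n - 2 * i + 3) + (2 * n - 2 * i + 3) := by ring
      rw [hexp]
      generalize (r + 1) * (2 * n - 2 * i + 3) = q
      omega

end IncProof


/-- Correctness of the incremental OMv construction at the end of phase `i`: in `G_i` there
is a walk from `z_1` of `P_0` to `y_1` of `P_{β+1}` of length strictly less than
`4(β+1) + (β+2)(2n−2i) + 2(i−1)` iff `∃ j k, u^i j ∧ M j k ∧ v^i k`. -/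
theorem stmt11 (n β i : ℕ) (hn : 1 ≤ n) (hi1 : 1 ≤ i) (hin : i ≤ n)
    (M : Fin n → Fin n → Prop) (u v : ℕ → Fin n → Prop) :
    (∃ p : (incGraph n β i M u v).Walk
        (IncVert.p 0 ⟨0, by omega⟩)
        (IncVert.p (Fin.last (β + 1)) ⟨2 * n - 2, by omega⟩),
      p.length < 4 * (β + 1) + (β + 2) * (2 * n - 2 * i) + 2 * (i - 1)) ↔
    ∃ j k, u i j ∧ M j k ∧ v i k := by
  
  constructor
  · rintro ⟨w, hlen⟩
    by_contra hno
    have hno' : ∀ j k, ¬(u i j ∧ M j k ∧ v i k) := fun j k h =>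
      hno ⟨j, k, h.1, h.2.1, h.2.2⟩
    have hb := IncProof.walk_pot (IncProof.pot n β i u v)
      (IncProof.pot_adj hi1 hin hno') w
    have hstart : IncProof.pot n β i u v (IncVert.p 0 ⟨0, by omega⟩) = 0 := by
      have h0 : ((0 : Fin (β + 2)) : ℕ) = 0 := rfl
      simp only [IncProof.pot, IncProof.bse, IncProof.eTrm, h0, if_pos rfl]
      rw [min_eq_left (by omega)]
      push_cast
      ring
    have hend : IncProof.pot n β i u v
        (IncVert.p (Fin.last (β + 1)) ⟨2 * n - 2, by omega⟩)
        = (i : ℤ) - 1 + ((β : ℤ) + 1) * (2 * (n : ℤ) - 2 * i + 4)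
          + ((2 * (n : ℤ) - 2) - ((i : ℤ) - 1)) := by
      simp only [IncProof.pot, IncProof.bse, IncProof.eTrm, Fin.val_last]
      rw [if_neg (by omega : ¬(β + 1 = 0))]
      simp only [if_true]
      rw [max_eq_left (by omega)]
      push_cast [Nat.cast_sub (by omega : 2 ≤ 2 * n)]
      ring
    rw [hstart, hend] at hb
    zify [show 2 * i ≤ 2 * n by omega, hi1] at hlen
    have e1 : ((β : ℤ) + 1) * (2 * (n : ℤ) - 2 * i + 4)
        = ((β : ℤ) + 1) * (2 * (n : ℤ) - 2 * i) + 4 * ((β : ℤ) + 1) := by ring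
    have e2 : ((β : ℤ) + 2) * (2 * (n : ℤ) - 2 * i)
        = ((β : ℤ) + 1) * (2 * (n : ℤ) - 2 * i) + (2 * (n : ℤ) - 2 * i) := by ring
    linarith
  · rintro ⟨j, k, hu, hM, hv⟩
    obtain ⟨w1, hw1⟩ := IncProof.walk_seg' (β := β) (i := i) (M := M) (u := u) (v := v) hn
      ⟨0, by omega⟩ 0 (2 * n - 1 - i) (by omega) (by omega)
    obtain ⟨w2, hw2⟩ := IncProof.chain (β := β) hn hi1 hin hu hM hv β 0 (by omega)
    refine ⟨(w1.append w2).copy (by congr 1) rfl, ?_⟩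
    rw [SimpleGraph.Walk.length_copy, SimpleGraph.Walk.length_append, hw1, hw2]
    obtain ⟨d, hd⟩ : ∃ d, d = 2 * n - 2 * i := ⟨_, rfl⟩
    rw [← hd]
    have h1 : (β + 1) * (d + 3) = (β + 1) * d + 3 * (β + 1) := by ring
    have h2 : (β + 2) * d = (β + 1) * d + d := by ring
    rw [h1, h2]
    obtain ⟨q, hq⟩ : ∃ q, q = (β + 1) * d := ⟨_, rfl⟩
    rw [← hq]
    omega
end

section
/- Let x ∈ V with χ(x) = 0. In the layered k-cycle gadget L, every walk from (0,x) to (k,x) has length at least k, and there exists such a walk of length at most k+1 if and only if there exist vertices v_0 = x, v_1, …, v_{k−1} ∈ V with χ(v_ℓ) = ℓ for all ℓ, (v_ℓ, v_{ℓ+1}) ∈ E for all ℓ < k−1, and (v_{k−1}, v_0) ∈ E (such vertices are pairwise distinct since their colors differ, so they form a directed k-cycle through x that is colorful for χ); in that case the minimum length of such a walk is exactly k. -/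
/-- Vertices of the layered `k`-cycle gadget: pairs `(ℓ, x)` with `ℓ ∈ {0,…,k}` and
`χ(x) = ℓ` if `ℓ < k`, `χ(x) = 0` if `ℓ = k` (equivalently, `(χ x : ℕ) = ℓ % k`). -/
def LayerVert {V : Type*} (k : ℕ) (χ : V → Fin k) : Type _ :=
  {q : Fin (k + 1) × V // ((χ q.2 : ℕ) = (q.1 : ℕ) % k)}

/-- One direction of each edge of the layered gadget: `(ℓ, x) — (ℓ+1, y)` iff `(x,y) ∈ E`. -/
def layerRel {V : Type*} (E : Set (V × V)) (k : ℕ) (χ : V → Fin k)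
    (x y : LayerVert k χ) : Prop :=
  (x.1.1 : ℕ) + 1 = (y.1.1 : ℕ) ∧ (x.1.2, y.1.2) ∈ E

/-- The layered `k`-cycle gadget. -/
def layerGraph {V : Type*} (E : Set (V × V)) (k : ℕ) (χ : V → Fin k) :
    SimpleGraph (LayerVert k χ) :=
  SimpleGraph.fromRel (layerRel E k χ)

/-- `x` lies on a directed `k`-cycle that is colorful for `χ`, with the colors in cyclic
order `0,1,…,k−1` starting at `x`. -/
def HasColorfulCycle {V : Type*} (E : Set (V × V)) (k : ℕ) (hk : 2 ≤ k)
    (χ : V → Fin k) (x : V) : Prop :=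
  ∃ v : Fin k → V, v ⟨0, by omega⟩ = x ∧ (∀ ℓ, χ (v ℓ) = ℓ) ∧
    ∀ ℓ : Fin k, (v ℓ, v (ℓ + ⟨1, by omega⟩)) ∈ E

namespace Stmt12Aux

variable {V : Type*} {E : Set (V × V)} {k : ℕ} {χ : V → Fin k} {x : V}

def layer (q : LayerVert k χ) : ℕ := q.1.1

lemma adj_layer {u v : LayerVert k χ} (h : (layerGraph E k χ).Adj u v) :
    layer v = layer u + 1 ∨ layer u = layer v + 1 := by
  rcases h with ⟨hne, h | h⟩
  · exact Or.inl h.1.symm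
  · exact Or.inr h.1.symm

lemma adj_up {u v : LayerVert k χ} (h : (layerGraph E k χ).Adj u v)
    (hl : layer v = layer u + 1) : (u.1.2, v.1.2) ∈ E := by
  rcases h with ⟨hne, h | h⟩
  · exact h.2
  · exfalso
    have := h.1
    unfold layer at hl
    omega

lemma walk_bounds {u v : LayerVert k χ} (p : (layerGraph E k χ).Walk u v) :
    layer v ≤ layer u + p.length ∧ layer u ≤ layer v + p.length := by
  induction p with
  | nil => simp
  | @cons a b c h q ih =>
    rcases adj_layer h with h1 | h1 <;> simp [SimpleGraph.Walk.length_cons] <;> omega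

lemma walk_parity {u v : LayerVert k χ} (p : (layerGraph E k χ).Walk u v) :
    (p.length + layer u + layer v) % 2 = 0 := by
  induction p with
  | nil => simp [Nat.add_mul_mod_self_left]; omega
  | @cons a b c h q ih =>
    rcases adj_layer h with h1 | h1 <;> simp only [SimpleGraph.Walk.length_cons] <;> omega

lemma up_walk {u v : LayerVert k χ} (p : (layerGraph E k χ).Walk u v)
    (h : layer v = layer u + p.length) :
    ∀ i < p.length, layer (p.getVert (i + 1)) = layer (p.getVert i) + 1 ∧
      ((p.getVert i).1.2, (p.getVert (i + 1)).1.2) ∈ E := by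
  induction p with
  | nil => simp
  | @cons a b c hadj q ih =>
    have hb := (walk_bounds q).1
    rcases adj_layer hadj with h1 | h1
    · have hq : layer c = layer b + q.length := by
        simp [SimpleGraph.Walk.length_cons] at h; omega
      intro i hi
      match i with
      | 0 =>
        simp only [SimpleGraph.Walk.getVert_zero, SimpleGraph.Walk.getVert_cons_succ]
        exact ⟨by simpa using h1, adj_up hadj h1⟩
      | (j + 1) =>
        simp only [SimpleGraph.Walk.getVert_cons_succ]
        exact ih hq j (by simp [SimpleGraph.Walk.length_cons] at hi; omega)
    · exfalso
      simp [SimpleGraph.Walk.length_cons] at h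
      omega

lemma up_walk_layer {u v : LayerVert k χ} (p : (layerGraph E k χ).Walk u v)
    (h : layer v = layer u + p.length) :
    ∀ i ≤ p.length, layer (p.getVert i) = layer u + i := by
  intro i hi
  induction i with
  | zero => simp
  | succ j ih =>
    have := (up_walk p h j (by omega)).1
    have := ih (by omega)
    omega

lemma walk_of_chain {W : Type*} (G : SimpleGraph W) (f : ℕ → W) :
    ∀ n, (∀ i < n, G.Adj (f i) (f (i + 1))) →
      ∃ p : G.Walk (f 0) (f n), p.length = n := by
  intro n
  induction n with
  | zero => exact fun _ => ⟨.nil, rfl⟩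
  | succ n ih =>
    intro h
    obtain ⟨p, hp⟩ := ih (fun i hi => h i (by omega))
    exact ⟨p.concat (h n (by omega)), by simp [SimpleGraph.Walk.length_concat, hp]⟩

lemma walk_to_cycle (hk : 2 ≤ k) {a b : LayerVert k χ}
    (ha : (a.1.1 : ℕ) = 0) (hax : a.1.2 = x) (hb : (b.1.1 : ℕ) = k) (hbx : b.1.2 = x)
    (p : (layerGraph E k χ).Walk a b) (hlen : p.length = k) :
    HasColorfulCycle E k hk χ x := by
  have hlay : layer b = layer a + p.length := by unfold layer; omega
  have hup := up_walk p hlay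
  have hlv := up_walk_layer p hlay
  refine ⟨fun ℓ => (p.getVert ℓ.1).1.2, ?_, ?_, ?_⟩
  · simpa using hax
  · intro ℓ
    have h1 := hlv ℓ.1 (by omega)
    have h2 := (p.getVert ℓ.1).2
    apply Fin.ext
    unfold layer at h1
    rw [h2, h1]
    simp [ha, Nat.mod_eq_of_lt ℓ.2]
  · intro ℓ
    have he := (hup ℓ.1 (by omega)).2
    by_cases hc : ℓ.1 + 1 < k
    · have h2 : ((ℓ + ⟨1, by omega⟩ : Fin k) : ℕ) = ℓ.1 + 1 := by
        simp [Fin.add_def, Nat.mod_eq_of_lt hc]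
      simp only [h2]
      exact he
    · have h1 : ℓ.1 + 1 = k := by omega
      have h2 : ((ℓ + ⟨1, by omega⟩ : Fin k) : ℕ) = 0 := by
        simp [Fin.add_def, h1]
      have hgv : p.getVert (ℓ.1 + 1) = b := p.getVert_of_length_le (by omega)
      simp only [h2, SimpleGraph.Walk.getVert_zero]
      rw [hgv, hbx] at he
      rw [hax]
      exact he

lemma cycle_to_walk (hk : 2 ≤ k) {a b : LayerVert k χ}
    (ha : (a.1.1 : ℕ) = 0) (hax : a.1.2 = x) (hb : (b.1.1 : ℕ) = k) (hbx : b.1.2 = x)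
    (hcc : HasColorfulCycle E k hk χ x) :
    ∃ p : (layerGraph E k χ).Walk a b, p.length = k := by
  obtain ⟨v, hv0, hχ, hE⟩ := hcc
  have hk0 : 0 < k := by omega
  set f : ℕ → LayerVert k χ := fun i =>
    if h : i ≤ k then ⟨(⟨i, by omega⟩, v ⟨i % k, Nat.mod_lt _ hk0⟩), by
      have := hχ ⟨i % k, Nat.mod_lt _ hk0⟩
      simpa using congrArg Fin.val this⟩
    else a with hf
  have hchain : ∀ i < k, (layerGraph E k χ).Adj (f i) (f (i + 1)) := by
    intro i hi
    rw [hf]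
    dsimp only
    erw [dif_pos (by omega : i ≤ k), dif_pos (by omega : i + 1 ≤ k)]
    refine ⟨?_, Or.inl ⟨rfl, ?_⟩⟩
    · intro hcon
      have := congrArg (fun q => (q.1.1 : ℕ)) hcon
      simp at this
    · have he := hE ⟨i, hi⟩
      have e1 : (⟨i % k, Nat.mod_lt _ hk0⟩ : Fin k) = ⟨i, hi⟩ :=
        Fin.ext (Nat.mod_eq_of_lt hi)
      have e2 : (⟨(i + 1) % k, Nat.mod_lt _ hk0⟩ : Fin k) = ⟨i, hi⟩ + ⟨1, by omega⟩ :=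
        Fin.ext (by simp [Fin.add_def])
      have hgoal : (v (⟨i % k, Nat.mod_lt _ hk0⟩ : Fin k),
          v (⟨(i + 1) % k, Nat.mod_lt _ hk0⟩ : Fin k)) ∈ E := by
        rw [e1, e2]; exact he
      exact hgoal
  obtain ⟨p, hp⟩ := walk_of_chain (layerGraph E k χ) f k hchain
  have h0 : f 0 = a := by
    rw [hf]
    simp only [dif_pos (Nat.zero_le k)]
    apply Subtype.ext
    apply Prod.ext
    · exact Fin.ext (by simpa using ha.symm)
    · show v _ = a.1.2
      rw [hax]
      rw [show (⟨0 % k, Nat.mod_lt _ hk0⟩ : Fin k) = ⟨0, by omega⟩ from Fin.ext (by simp)]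
      exact hv0
  have hkk : f k = b := by
    rw [hf]
    dsimp only
    erw [dif_pos (le_refl k)]
    apply Subtype.ext
    apply Prod.ext
    · exact Fin.ext (by simpa using hb.symm)
    · show v _ = b.1.2
      rw [hbx]
      rw [show (⟨k % k, Nat.mod_lt _ hk0⟩ : Fin k) = ⟨0, by omega⟩ from Fin.ext (by simp)]
      exact hv0
  exact ⟨p.copy h0 hkk, by simp [hp]⟩

end Stmt12Aux

/-- In the layered `k`-cycle gadget, every walk from `(0,x)` to `(k,x)` has length at least
`k`; a walk of length at most `k+1` exists iff `x` lies on a colorful directed `k`-cycle;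
and in that case the minimum walk length (the distance) is exactly `k`. -/
theorem stmt12 {V : Type*} [Fintype V] (E : Set (V × V)) (k : ℕ) (hk : 2 ≤ k)
    (χ : V → Fin k) (x : V) (hx : (χ x : ℕ) = 0) :
    (∀ p : (layerGraph E k χ).Walk
        ⟨(0, x), by simpa using hx⟩ ⟨(Fin.last k, x), by simpa [Nat.mod_self] using hx⟩,
      k ≤ p.length) ∧
    ((∃ p : (layerGraph E k χ).Walk
        ⟨(0, x), by simpa using hx⟩ ⟨(Fin.last k, x), by simpa [Nat.mod_self] using hx⟩,
      p.length ≤ k + 1) ↔ HasColorfulCycle E k hk χ x) ∧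
    (HasColorfulCycle E k hk χ x →
      (layerGraph E k χ).dist
        ⟨(0, x), by simpa using hx⟩ ⟨(Fin.last k, x), by simpa [Nat.mod_self] using hx⟩ = k) := by
  set a : LayerVert k χ := ⟨(0, x), by simpa using hx⟩ with ha'
  set b : LayerVert k χ := ⟨(Fin.last k, x), by simpa [Nat.mod_self] using hx⟩ with hb'
  have ha : (a.1.1 : ℕ) = 0 := by simp [ha']
  have hb : (b.1.1 : ℕ) = k := by simp [hb']
  have hla : Stmt12Aux.layer a = 0 := ha
  have hlb : Stmt12Aux.layer b = k := hb
  have part1 : ∀ p : (layerGraph E k χ).Walk a b, k ≤ p.length := by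
    intro p
    have := (Stmt12Aux.walk_bounds p).1
    omega
  refine ⟨part1, ⟨?_, ?_⟩, ?_⟩
  · rintro ⟨p, hple⟩
    have h1 := part1 p
    have h2 := Stmt12Aux.walk_parity p
    rw [hla, hlb] at h2
    have hlen : p.length = k := by omega
    exact Stmt12Aux.walk_to_cycle hk ha rfl hb rfl p hlen
  · intro hcc
    obtain ⟨p, hp⟩ := Stmt12Aux.cycle_to_walk hk ha rfl hb rfl hcc
    exact ⟨p, by omega⟩
  · intro hcc
    obtain ⟨p, hp⟩ := Stmt12Aux.cycle_to_walk hk ha rfl hb rfl hcc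
    have hle : (layerGraph E k χ).dist a b ≤ k := by
      have := SimpleGraph.dist_le p; omega
    have hreach : (layerGraph E k χ).Reachable a b := ⟨p⟩
    obtain ⟨q, hq⟩ := hreach.exists_walk_length_eq_dist
    have := part1 q
    omega
end

section
/- (Correctness of the fully dynamic k-cycle construction.) In the chained gadget G', there exists a walk from the vertex (0,x) of L₁ to the vertex (k,x) of L_c of length strictly less than (k+2)c − 1 if and only if there exist vertices v_0 = x, v_1, …, v_{k−1} ∈ V with χ(v_ℓ) = ℓ for all ℓ, (v_ℓ, v_{ℓ+1}) ∈ E for all ℓ < k−1, and (v_{k−1}, v_0) ∈ E. Moreover, when this holds the distance between these two vertices equals (k+1)c − 1, and when it fails every such walk has length at least (k+3)c − 1. -/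
/-- One direction of each edge of the chained gadget `G'`: edges inside each of the `c`
copies of the layered gadget, together with, for each `m` with `m+1 < c`, a connector edge
between the vertex `(k, x₀)` of copy `m` and the vertex `(0, x₀)` of copy `m+1`. -/
def chainKRel {V : Type*} (E : Set (V × V)) (k c : ℕ) (χ : V → Fin k) (x₀ : V)
    (x y : Fin c × LayerVert k χ) : Prop :=
  (x.1 = y.1 ∧ layerRel E k χ x.2 y.2) ∨
  ((x.1 : ℕ) + 1 = (y.1 : ℕ) ∧ (x.2.1.1 : ℕ) = k ∧ (y.2.1.1 : ℕ) = 0 ∧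
    x.2.1.2 = x₀ ∧ y.2.1.2 = x₀)

/-- The chained gadget `G'`: `c` disjoint copies of the layered `k`-cycle gadget, with
consecutive copies linked through the vertex `x₀`. -/
def chainKGraph {V : Type*} (E : Set (V × V)) (k c : ℕ) (χ : V → Fin k) (x₀ : V) :
    SimpleGraph (Fin c × LayerVert k χ) :=
  SimpleGraph.fromRel (chainKRel E k c χ x₀)

namespace Stmt13Aux

open SimpleGraph

variable {V : Type*} (E : Set (V × V)) (k c : ℕ) (χ : V → Fin k) (x : V)

def R : ℕ → V → Prop
  | 0, v => v = x
  | n+1, v => ((χ v : ℕ) = (n+1) % k) ∧ ∃ u, R n u ∧ (u, v) ∈ E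

lemma R_extract : ∀ n w, R E k χ x n w → ∃ u : ℕ → V, u 0 = x ∧ u n = w ∧
    (∀ i, 0 < i → i ≤ n → (χ (u i) : ℕ) = i % k) ∧ (∀ i < n, (u i, u (i+1)) ∈ E) := by
  intro n
  induction n with
  | zero =>
    intro w h
    exact ⟨fun _ => x, rfl, by simp only [R] at h; exact h.symm,
      fun i h1 h2 => by omega, fun i h => by omega⟩
  | succ n ih =>
    intro w h
    simp only [R] at h
    obtain ⟨hχw, y, hy, hyw⟩ := h
    obtain ⟨u, hu0, hun, huχ, huE⟩ := ih y hy
    refine ⟨fun i => if i ≤ n then u i else w, by simp [hu0], by simp, ?_, ?_⟩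
    · intro i h1 h2
      by_cases hin : i ≤ n
      · simpa [hin] using huχ i h1 hin
      · have hi : i = n + 1 := by omega
        simp [hin, hi, hχw]
    · intro i hi
      by_cases hin : i < n
      · have h1 : i ≤ n := by omega
        have h2 : i + 1 ≤ n := by omega
        simpa [h1, h2] using huE i hin
      · have hieq : i = n := by omega
        subst hieq
        simpa [hun] using hyw


lemma cycle_of_R (hk : 2 ≤ k) (hx : (χ x : ℕ) = 0) (h : R E k χ x k x) :
    HasColorfulCycle E k hk χ x := by
  obtain ⟨u, hu0, huk, huχ, huE⟩ := R_extract E k χ x k x h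
  refine ⟨fun ℓ => u ℓ, hu0, ?_, ?_⟩
  · intro ℓ
    have hbeta : (fun (ℓ : Fin k) => u (ℓ : ℕ)) ℓ = u (ℓ : ℕ) := rfl
    rcases Nat.eq_zero_or_pos (ℓ : ℕ) with h0 | hpos
    · have hux : u (ℓ : ℕ) = x := by rw [h0, hu0]
      ext
      rw [hbeta, hux, hx, h0]
    · ext
      rw [hbeta, huχ _ hpos (le_of_lt ℓ.2), Nat.mod_eq_of_lt ℓ.2]
  · intro ℓ
    have hE := huE ℓ ℓ.2
    have hval : ((ℓ + ⟨1, by omega⟩ : Fin k) : ℕ) = ((ℓ : ℕ) + 1) % k := by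
      simp [Fin.add_def]
    rcases Nat.lt_or_ge ((ℓ : ℕ) + 1) k with hlt | hge
    · have : ((ℓ + ⟨1, by omega⟩ : Fin k) : ℕ) = (ℓ : ℕ) + 1 := by
        rw [hval, Nat.mod_eq_of_lt hlt]
      simpa [this] using hE
    · have hek : (ℓ : ℕ) + 1 = k := by omega
      have h1 : ((ℓ + ⟨1, by omega⟩ : Fin k) : ℕ) = 0 := by
        rw [hval, hek, Nat.mod_self]
      have h2 : u ((ℓ + ⟨1, by omega⟩ : Fin k) : ℕ) = u ((ℓ : ℕ) + 1) := by
        rw [h1, hu0, hek, huk]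
      simpa [h2] using hE

/-- potential lower bound on walk lengths -/
lemma length_ge {α : Type*} (G : SimpleGraph α) (f : α → ℤ)
    (hf : ∀ u v, G.Adj u v → f v ≤ f u + 1) :
    ∀ {a b : α} (p : G.Walk a b), f b - f a ≤ p.length := by
  intro a b p
  induction p with
  | nil => simp
  | cons h q ih =>
    have h1 := hf _ _ h
    rw [SimpleGraph.Walk.length_cons]
    push_cast
    omega

def f1 : Fin c × LayerVert k χ → ℤ :=
  fun q => (q.1 : ℕ) * ((k : ℤ) + 1) + (q.2.1.1 : ℕ)

lemma rel_f1 {a b : Fin c × LayerVert k χ} (h : chainKRel E k c χ x a b) :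
    f1 k c χ b = f1 k c χ a + 1 := by
  rcases h with ⟨hm, hl, _⟩ | ⟨hm, hka, hkb, _, _⟩
  · simp only [f1, hm]
    omega
  · simp only [f1, hka, hkb]
    have : ((b.1 : ℕ) : ℤ) = (a.1 : ℕ) + 1 := by exact_mod_cast hm.symm
    rw [this]
    push_cast
    ring

lemma adj_f1 {a b : Fin c × LayerVert k χ}
    (h : (chainKGraph E k c χ x).Adj a b) : f1 k c χ b ≤ f1 k c χ a + 1 := by
  rw [chainKGraph, fromRel_adj] at h
  rcases h.2 with h' | h'
  · exact le_of_eq (rel_f1 E k c χ x h')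
  · have := rel_f1 E k c χ x h'
    omega

open Classical in
noncomputable def g : LayerVert k χ → ℤ :=
  fun w => if R E k χ x (w.1.1 : ℕ) w.1.2 then ((w.1.1 : ℕ) : ℤ) else (w.1.1 : ℕ) + 2

noncomputable def f2 : Fin c × LayerVert k χ → ℤ :=
  fun q => (q.1 : ℕ) * ((k : ℤ) + 3) + g E k χ x q.2

lemma rel_f2 (hnc : ¬ R E k χ x k x) {a b : Fin c × LayerVert k χ}
    (h : chainKRel E k c χ x a b) :
    f2 E k c χ x b = f2 E k c χ x a + 1 ∨ f2 E k c χ x b = f2 E k c χ x a - 1 := by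
  rcases h with ⟨hm, hl, hE⟩ | ⟨hm, hka, hkb, hva, hvb⟩
  · -- intra-copy edge
    have hbl : (b.2.1.1 : ℕ) = (a.2.1.1 : ℕ) + 1 := hl.symm
    have hma : ((a.1 : ℕ) : ℤ) = ((b.1 : ℕ) : ℤ) := by rw [hm]
    by_cases hRa : R E k χ x (a.2.1.1 : ℕ) a.2.1.2
    · have hRb : R E k χ x (b.2.1.1 : ℕ) b.2.1.2 := by
        rw [hbl]
        simp only [R]
        exact ⟨by rw [← hbl]; exact b.2.2, ⟨a.2.1.2, hRa, hE⟩⟩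
      left
      simp only [f2, g, if_pos hRa, if_pos hRb, hbl, ← hma]
      push_cast; ring
    · by_cases hRb : R E k χ x (b.2.1.1 : ℕ) b.2.1.2
      · right
        simp only [f2, g, if_pos hRb, if_neg hRa, hbl, ← hma]
        push_cast; ring
      · left
        simp only [f2, g, if_neg hRb, if_neg hRa, hbl, ← hma]
        push_cast; ring
  · -- connector edge
    left
    have hRb : R E k χ x (b.2.1.1 : ℕ) b.2.1.2 := by
      rw [hkb, hvb]
      simp only [R]
    have hRa : ¬ R E k χ x (a.2.1.1 : ℕ) a.2.1.2 := by
      rw [hka, hva]; exact hnc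
    have hmb : ((b.1 : ℕ) : ℤ) = (a.1 : ℕ) + 1 := by exact_mod_cast hm.symm
    simp only [f2, g, if_pos hRb, if_neg hRa, hka, hkb, hmb]
    push_cast; ring

lemma adj_f2 (hnc : ¬ R E k χ x k x) {a b : Fin c × LayerVert k χ}
    (h : (chainKGraph E k c χ x).Adj a b) : f2 E k c χ x b ≤ f2 E k c χ x a + 1 := by
  rw [chainKGraph, fromRel_adj] at h
  rcases h.2 with h' | h' <;> rcases rel_f2 E k c χ x hnc h' with h'' | h'' <;> omega


variable (u : ℕ → V)

/-- a gadget vertex built from the sequence `u`. -/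
def Bv (m i : ℕ) (hm : m < c) (hi : i ≤ k) (hχ : (χ (u i) : ℕ) = i % k) :
    Fin c × LayerVert k χ :=
  (⟨m, hm⟩, ⟨(⟨i, Nat.lt_succ_of_le hi⟩, u i), hχ⟩)

lemma adj_intra {m i : ℕ} (hm : m < c) (hi : i < k)
    (hχ1 : (χ (u i) : ℕ) = i % k) (hχ2 : (χ (u (i+1)) : ℕ) = (i+1) % k)
    (hE : (u i, u (i+1)) ∈ E) :
    (chainKGraph E k c χ x).Adj (Bv k c χ u m i hm (le_of_lt hi) hχ1)
      (Bv k c χ u m (i+1) hm hi hχ2) := by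
  rw [chainKGraph, fromRel_adj]
  refine ⟨?_, Or.inl (Or.inl ⟨rfl, ⟨rfl, hE⟩⟩)⟩ <;> try exact ?_
  · intro h
    have := congrArg (fun q => ((q.2.1 : Fin (k+1) × V).1 : ℕ)) h
    simp only [Bv] at this
    omega

lemma adj_conn {m : ℕ} (hm : m < c) (hm1 : m + 1 < c)
    (hχ1 : (χ (u k) : ℕ) = k % k) (hχ2 : (χ (u 0) : ℕ) = 0 % k)
    (huk : u k = x) (hu0 : u 0 = x) :
    (chainKGraph E k c χ x).Adj (Bv k c χ u m k hm le_rfl hχ1)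
      (Bv k c χ u (m+1) 0 hm1 (Nat.zero_le k) hχ2) := by
  rw [chainKGraph, fromRel_adj]
  refine ⟨?_, Or.inl (Or.inr ⟨rfl, rfl, rfl, huk, hu0⟩)⟩
  · intro h
    have := congrArg (fun q => ((q.1 : Fin c) : ℕ)) h
    simp only [Bv] at this
    omega

variable (hχu : ∀ i ≤ k, (χ (u i) : ℕ) = i % k)

lemma walk_up (m : ℕ) (hm : m < c) :
    ∀ j i (hij : i + j = k) (hEu : ∀ i < k, (u i, u (i+1)) ∈ E),
    ∃ p : (chainKGraph E k c χ x).Walk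
        (Bv k c χ u m i hm (by omega) (hχu i (by omega)))
        (Bv k c χ u m k hm le_rfl (hχu k le_rfl)),
      p.length = j := by
  intro j
  induction j with
  | zero =>
    intro i hij hEu
    obtain rfl : i = k := by omega
    exact ⟨.nil, rfl⟩
  | succ j ih =>
    intro i hij hEu
    obtain ⟨p, hp⟩ := ih (i+1) (by omega) hEu
    refine ⟨.cons (adj_intra E k c χ x u hm (by omega) (hχu i (by omega))
      (hχu (i+1) (by omega)) (hEu i (by omega))) p, by simp [hp]⟩

lemma walk_chain (hc : 1 ≤ c) (huk : u k = x) (hu0 : u 0 = x)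
    (hEu : ∀ i < k, (u i, u (i+1)) ∈ E) :
    ∀ d m (hm : m < c) (hd : m + d = c - 1),
    ∃ p : (chainKGraph E k c χ x).Walk
        (Bv k c χ u m 0 hm (Nat.zero_le k) (hχu 0 (Nat.zero_le k)))
        (Bv k c χ u (c-1) k (by omega) le_rfl (hχu k le_rfl)),
      p.length = d * (k + 1) + k := by
  intro d
  induction d with
  | zero =>
    intro m hm hd
    obtain rfl : m = c - 1 := by omega
    obtain ⟨p, hp⟩ := walk_up E k c χ x u hχu (c-1) hm k 0 (by omega) hEu
    exact ⟨p, by simp [hp]⟩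
  | succ d ih =>
    intro m hm hd
    have hm1 : m + 1 < c := by omega
    obtain ⟨p, hp⟩ := walk_up E k c χ x u hχu m hm k 0 (by omega) hEu
    obtain ⟨q, hq⟩ := ih (m+1) hm1 (by omega)
    refine ⟨p.append (.cons (adj_conn E k c χ x u hm hm1 (hχu k le_rfl)
      (hχu 0 (Nat.zero_le k)) huk hu0) q), ?_⟩
    simp [hp, hq]
    ring


end Stmt13Aux

open Stmt13Aux

set_option maxHeartbeats 1000000 in
/-- Correctness of the fully dynamic `k`-cycle construction: in the chained gadget `G'`
there is a walk from the vertex `(0,x)` of the first copy to the vertex `(k,x)` of the last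
copy of length strictly less than `(k+2)c − 1` iff `x` lies on a colorful directed
`k`-cycle; if so, the distance between these vertices is `(k+1)c − 1`, and if not, every
such walk has length at least `(k+3)c − 1`. -/
theorem stmt13 {V : Type*} [Fintype V] (E : Set (V × V)) (k c : ℕ) (hk : 2 ≤ k)
    (hc : 1 ≤ c) (χ : V → Fin k) (x : V) (hx : (χ x : ℕ) = 0) :
    ((∃ p : (chainKGraph E k c χ x).Walk
        (⟨0, by omega⟩, ⟨(0, x), by simpa using hx⟩)
        (⟨c - 1, by omega⟩, ⟨(Fin.last k, x), by simpa [Nat.mod_self] using hx⟩),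
      p.length < (k + 2) * c - 1) ↔ HasColorfulCycle E k hk χ x) ∧
    (HasColorfulCycle E k hk χ x →
      (chainKGraph E k c χ x).dist
        (⟨0, by omega⟩, ⟨(0, x), by simpa using hx⟩)
        (⟨c - 1, by omega⟩, ⟨(Fin.last k, x), by simpa [Nat.mod_self] using hx⟩)
        = (k + 1) * c - 1) ∧
    (¬HasColorfulCycle E k hk χ x →
      ∀ p : (chainKGraph E k c χ x).Walk
        (⟨0, by omega⟩, ⟨(0, x), by simpa using hx⟩)
        (⟨c - 1, by omega⟩, ⟨(Fin.last k, x), by simpa [Nat.mod_self] using hx⟩),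
      (k + 3) * c - 1 ≤ p.length) := by
  have hfact1 : (k + 1) * c - 1 = (c - 1) * (k + 1) + k := by
    cases c with
    | zero => omega
    | succ n => have : (k+1)*(n+1) = n*(k+1)+k+1 := by ring
                simp only [Nat.succ_sub_one]; omega
  have hfact2 : (k + 3) * c - 1 = (c - 1) * (k + 3) + (k + 2) := by
    cases c with
    | zero => omega
    | succ n => have : (k+3)*(n+1) = n*(k+3)+(k+2)+1 := by ring
                simp only [Nat.succ_sub_one]; omega
  have hA : (k + 2) * c = (k + 1) * c + c := by ring
  have hB : (k + 3) * c = (k + 2) * c + c := by ring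
  -- universal lower bound
  have key1 : ∀ p : (chainKGraph E k c χ x).Walk
      (⟨0, by omega⟩, ⟨(0, x), by simpa using hx⟩)
      (⟨c - 1, by omega⟩, ⟨(Fin.last k, x), by simpa [Nat.mod_self] using hx⟩),
      (k + 1) * c - 1 ≤ p.length := by
    intro p
    have h := length_ge _ _ (fun a b h => adj_f1 E k c χ x h) p
    have e1 : f1 k c χ (⟨0, by omega⟩, ⟨(0, x), by simpa using hx⟩) = 0 := by
      simp [f1]
    have e2 : f1 k c χ (⟨c - 1, by omega⟩,
        ⟨(Fin.last k, x), by simpa [Nat.mod_self] using hx⟩) = ((c-1 : ℕ) : ℤ) * (k+1) + k := by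
      simp [f1]
    rw [e1, e2] at h
    have h' : ((c-1 : ℕ) : ℤ) * ((k : ℤ) + 1) + k ≤ (p.length : ℤ) := by linarith
    rw [hfact1]
    exact_mod_cast h'
  -- lower bound in the no-cycle case
  have key2 : ¬HasColorfulCycle E k hk χ x → ∀ p : (chainKGraph E k c χ x).Walk
      (⟨0, by omega⟩, ⟨(0, x), by simpa using hx⟩)
      (⟨c - 1, by omega⟩, ⟨(Fin.last k, x), by simpa [Nat.mod_self] using hx⟩),
      (k + 3) * c - 1 ≤ p.length := by
    intro hnc p
    have hnR : ¬ R E k χ x k x := fun hR => hnc (cycle_of_R E k χ x hk hx hR)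
    have h := length_ge _ _ (fun a b h => adj_f2 E k c χ x hnR h) p
    have hR0 : R E k χ x 0 x := by simp only [R]
    have e1 : f2 E k c χ x (⟨0, by omega⟩, ⟨(0, x), by simpa using hx⟩) = 0 := by
      simp [f2, g, hR0]
    have e2 : f2 E k c χ x (⟨c - 1, by omega⟩,
        ⟨(Fin.last k, x), by simpa [Nat.mod_self] using hx⟩)
        = ((c-1 : ℕ) : ℤ) * ((k : ℤ)+3) + ((k : ℤ)+2) := by
      simp [f2, g, hnR]
    rw [e1, e2] at h
    have h' : ((c-1 : ℕ) : ℤ) * ((k : ℤ) + 3) + ((k : ℤ) + 2) ≤ (p.length : ℤ) := by linarith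
    rw [hfact2]
    exact_mod_cast h'
  -- walk construction from a colorful cycle
  have key3 : HasColorfulCycle E k hk χ x → ∃ p : (chainKGraph E k c χ x).Walk
      (⟨0, by omega⟩, ⟨(0, x), by simpa using hx⟩)
      (⟨c - 1, by omega⟩, ⟨(Fin.last k, x), by simpa [Nat.mod_self] using hx⟩),
      p.length = (k + 1) * c - 1 := by
    rintro ⟨v, hv0, hχv, hEv⟩
    set u : ℕ → V := fun i => v ⟨i % k, Nat.mod_lt i (by omega)⟩ with hu
    have hval : ∀ i : ℕ, (χ (u i) : ℕ) = i % k := by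
      intro i
      show (χ (v ⟨i % k, Nat.mod_lt i (by omega)⟩) : ℕ) = i % k
      rw [hχv]
    have hu0 : u 0 = x := by
      show v ⟨0 % k, Nat.mod_lt 0 (by omega)⟩ = x
      have h0 : (⟨0 % k, Nat.mod_lt 0 (by omega)⟩ : Fin k) = ⟨0, by omega⟩ := by
        ext; simp
      rw [h0]; exact hv0
    have huk : u k = x := by
      show v ⟨k % k, Nat.mod_lt k (by omega)⟩ = x
      have h0 : (⟨k % k, Nat.mod_lt k (by omega)⟩ : Fin k) = ⟨0, by omega⟩ := by
        ext; simp
      rw [h0]; exact hv0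
    have hEu : ∀ i < k, (u i, u (i+1)) ∈ E := by
      intro i hi
      have h1 : (⟨i % k, Nat.mod_lt i (by omega)⟩ : Fin k) = ⟨i, hi⟩ := by
        ext; simp [Nat.mod_eq_of_lt hi]
      have h2 : (⟨(i+1) % k, Nat.mod_lt (i+1) (by omega)⟩ : Fin k)
          = (⟨i, hi⟩ + ⟨1, by omega⟩ : Fin k) := by
        ext
        simp [Fin.add_def, Nat.add_mod, Nat.mod_eq_of_lt hi]
      show (v ⟨i % k, Nat.mod_lt i (by omega)⟩, v ⟨(i+1) % k, Nat.mod_lt (i+1) (by omega)⟩) ∈ E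
      rw [h1, h2]
      exact hEv ⟨i, hi⟩
    obtain ⟨p, hp⟩ := walk_chain E k c χ x u (fun i _ => hval i) hc huk hu0 hEu (c-1) 0
      (by omega) (by omega)
    have hs : (Bv k c χ u 0 0 (by omega) (Nat.zero_le k) (hval 0)
        : Fin c × LayerVert k χ)
        = ((⟨0, by omega⟩, ⟨(0, x), by simpa using hx⟩) : Fin c × LayerVert k χ) := by
      simp only [Bv]
      exact Prod.ext rfl (Subtype.ext (Prod.ext (Fin.ext (by simp)) hu0))
    have ht : (Bv k c χ u (c-1) k (by omega) le_rfl (hval k)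
        : Fin c × LayerVert k χ)
        = ((⟨c - 1, by omega⟩, ⟨(Fin.last k, x), by simpa [Nat.mod_self] using hx⟩)
          : Fin c × LayerVert k χ) := by
      simp only [Bv]
      exact Prod.ext rfl (Subtype.ext (Prod.ext rfl huk))
    refine ⟨p.copy hs ht, ?_⟩
    rw [SimpleGraph.Walk.length_copy, hp, hfact1]
  refine ⟨⟨?_, ?_⟩, ?_, ?_⟩
  · rintro ⟨p, hp⟩
    by_contra hnc
    have := key2 hnc p
    omega
  · intro hcyc
    obtain ⟨p, hp⟩ := key3 hcyc
    exact ⟨p, by omega⟩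
  · intro hcyc
    obtain ⟨p, hp⟩ := key3 hcyc
    refine le_antisymm ?_ ?_
    · have := SimpleGraph.dist_le p
      omega
    · obtain ⟨q, hq⟩ := SimpleGraph.Reachable.exists_walk_length_eq_dist ⟨p⟩
      have := key1 q
      omega
  · exact key2
end

section
/- Assume b ≥ 1. Let v ∈ V and let j ≤ i be natural numbers with i ≤ k. If there exists a vertex a ∈ A_{i+1} with dist(v,a) ≤ b^{i+1}/8, then every vertex a' of level j with dist(v,a') ≤ b^{j+1}/8 is not active. -/
private lemma dist_tri {V : Type*} {G : SimpleGraph V} {u v w : V}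
    (h1 : G.Reachable u v) (h2 : G.Reachable v w) :
    G.dist u w ≤ G.dist u v + G.dist v w := by
  obtain ⟨p, hp⟩ := h1.exists_walk_length_eq_dist
  obtain ⟨q, hq⟩ := h2.exists_walk_length_eq_dist
  rw [← hp, ← hq, ← SimpleGraph.Walk.length_append]
  apply SimpleGraph.dist_le

private lemma find_level {V : Type*} (A : ℕ → Set V) (a : V) :
    ∀ d m, a ∈ A m → a ∉ A (m + d) → ∃ q, m ≤ q ∧ a ∈ A q ∧ a ∉ A (q + 1) := by
  intro d
  induction d with
  | zero => intro m h1 h2; exact absurd h1 h2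
  | succ n ih =>
    intro m h1 h2
    by_cases hm : a ∈ A (m + 1)
    · obtain ⟨q, hq1, hq2⟩ := ih (m + 1) hm (by rwa [show m + 1 + n = m + (n + 1) by omega])
      exact ⟨q, le_trans (Nat.le_succ m) hq1, hq2⟩
    · exact ⟨m, le_refl m, h1, hm⟩

/-- If `b ≥ 1`, `j ≤ i ≤ k`, and some vertex `a ∈ A_{i+1}` satisfies `dist(v,a) ≤ b^{i+1}/8`,
then every vertex `a'` of level `j` with `dist(v,a') ≤ b^{j+1}/8` is not active, i.e. there is
a level `q > j` and a vertex `a''` of level `q` with `dist(a',a'') ≤ C(j,q)/4`. -/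
theorem stmt15 {V : Type*} [Fintype V] (G : SimpleGraph V)
    (k : ℕ) (hk : 1 ≤ k) (A : ℕ → Set V)
    (hA0 : A 0 = Set.univ) (hnest : ∀ i, A (i + 1) ⊆ A i) (hAtop : A (k + 1) = ∅)
    (b : ℝ) (hb : 1 ≤ b)
    (C : ℕ → ℕ → ℝ) (hC : ∀ p q, C p q = ∑ y ∈ Finset.Icc (p + 1) q, b ^ y)
    (v : V) (i j : ℕ) (hji : j ≤ i) (hik : i ≤ k)
    (hex : ∃ a ∈ A (i + 1), G.Reachable v a ∧ (G.dist v a : ℝ) ≤ b ^ (i + 1) / 8) :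
    ∀ a' ∈ A j \ A (j + 1),
      (G.Reachable v a' ∧ (G.dist v a' : ℝ) ≤ b ^ (j + 1) / 8) →
      ∃ q, j < q ∧ ∃ a'' ∈ A q \ A (q + 1), G.Reachable a' a'' ∧
        (G.dist a' a'' : ℝ) ≤ C j q / 4 := by
  intro a' ha' ⟨hr', hd'⟩
  obtain ⟨a, haA, hra, hda⟩ := hex
  -- find the level q of a
  have hnotop : a ∉ A (k + 1) := by rw [hAtop]; exact Set.notMem_empty a
  obtain ⟨q, hq1, hqA, hqA'⟩ := find_level A a (k - i) (i + 1) haA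
    (by rwa [show i + 1 + (k - i) = k + 1 by omega])
  have hjq : j < q := by omega
  refine ⟨q, hjq, a, ⟨hqA, hqA'⟩, hr'.symm.trans hra, ?_⟩
  -- distance bound
  have htri := dist_tri hr'.symm hra
  have hb0 : (0:ℝ) ≤ b := le_trans zero_le_one hb
  have hCge : b ^ (j + 1) + b ^ (i + 1) ≤ 2 * C j q := by
    rw [hC]
    rcases eq_or_lt_of_le hji with rfl | hlt
    · have : b ^ (j+1) ≤ ∑ y ∈ Finset.Icc (j + 1) q, b ^ y := by
        apply Finset.single_le_sum (f := fun y => b ^ y)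
          (fun y _ => pow_nonneg hb0 y)
        simp [Finset.mem_Icc]; omega
      linarith
    · have hsub : ({j+1, i+1} : Finset ℕ) ⊆ Finset.Icc (j + 1) q := by
        intro y hy
        simp only [Finset.mem_insert, Finset.mem_singleton] at hy
        rcases hy with rfl | rfl <;> simp [Finset.mem_Icc] <;> omega
      have hsum : ∑ y ∈ ({j+1, i+1} : Finset ℕ), b ^ y
          ≤ ∑ y ∈ Finset.Icc (j + 1) q, b ^ y :=
        Finset.sum_le_sum_of_subset_of_nonneg hsub (fun y _ _ => pow_nonneg hb0 y)
      rw [Finset.sum_pair (by omega)] at hsum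
      linarith
  have hdcast : (G.dist a' a : ℝ) ≤ (G.dist a' v : ℝ) + (G.dist v a : ℝ) := by
    exact_mod_cast htri
  have hcomm : (G.dist a' v : ℝ) = (G.dist v a' : ℝ) := by
    rw [SimpleGraph.dist_comm]
  linarith
end

section
/- Suppose a vertex a of level p is not active, and let j be the largest level such that some vertex of level j is at distance at most ε'^{−(j+1)} − ε'^{−(p+1)} from a (such a j exists and satisfies p < j ≤ k). Then every vertex a' of level j with dist(a,a') ≤ ε'^{−(j+1)} − ε'^{−(p+1)} is active. -/
lemma dist_tri_aux {V : Type*} (G : SimpleGraph V) {a b c : V}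
    (h1 : G.Reachable a b) (h2 : G.Reachable b c) :
    G.dist a c ≤ G.dist a b + G.dist b c := by
  obtain ⟨w1, hw1⟩ := h1.exists_walk_length_eq_dist
  obtain ⟨w2, hw2⟩ := h2.exists_walk_length_eq_dist
  calc G.dist a c ≤ (w1.append w2).length := SimpleGraph.dist_le _
    _ = G.dist a b + G.dist b c := by rw [SimpleGraph.Walk.length_append, hw1, hw2]

/-- If a vertex `a` of level `p` is not active, and `j` is the largest level such that some
vertex of level `j` is within `ε'^{-(j+1)} − ε'^{-(p+1)}` of `a`, then `p < j ≤ k` and every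
vertex `a'` of level `j` within that distance of `a` is active. -/
theorem stmt16 {V : Type*} [Fintype V] (G : SimpleGraph V)
    (k : ℕ) (hk : 1 ≤ k) (A : ℕ → Set V)
    (hA0 : A 0 = Set.univ) (hnest : ∀ i, A (i + 1) ⊆ A i) (hAtop : A (k + 1) = ∅)
    (ε' : ℝ) (hε0 : 0 < ε') (hε1 : ε' < 1)
    (a : V) (p : ℕ) (ha : a ∈ A p \ A (p + 1))
    (hinactive : ∃ q, p < q ∧ ∃ a' ∈ A q \ A (q + 1), G.Reachable a a' ∧
      (G.dist a a' : ℝ) ≤ ε' ^ (-((q : ℤ) + 1)) - ε' ^ (-((p : ℤ) + 1)))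
    (j : ℕ)
    (hj : ∃ a' ∈ A j \ A (j + 1), G.Reachable a a' ∧
      (G.dist a a' : ℝ) ≤ ε' ^ (-((j : ℤ) + 1)) - ε' ^ (-((p : ℤ) + 1)))
    (hjmax : ∀ j', j < j' → ¬∃ a' ∈ A j' \ A (j' + 1), G.Reachable a a' ∧
      (G.dist a a' : ℝ) ≤ ε' ^ (-((j' : ℤ) + 1)) - ε' ^ (-((p : ℤ) + 1))) :
    p < j ∧ j ≤ k ∧
    ∀ a' ∈ A j \ A (j + 1),
      (G.Reachable a a' ∧
        (G.dist a a' : ℝ) ≤ ε' ^ (-((j : ℤ) + 1)) - ε' ^ (-((p : ℤ) + 1))) →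
      ¬∃ q, j < q ∧ ∃ a'' ∈ A q \ A (q + 1), G.Reachable a' a'' ∧
        (G.dist a' a'' : ℝ) ≤ ε' ^ (-((q : ℤ) + 1)) - ε' ^ (-((j : ℤ) + 1)) := by
  have hmono : ∀ {m n : ℕ}, m ≤ n → A n ⊆ A m := by
    intro m n hmn
    induction hmn with
    | refl => exact le_refl _
    | step h ih => exact fun x hx => ih (hnest _ hx)
  have hpj : p < j := by
    obtain ⟨q, hpq, hq⟩ := hinactive
    rcases lt_or_ge j q with h | h
    · exact absurd hq (hjmax q h)
    · omega
  have hjk : j ≤ k := by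
    by_contra h
    push_neg at h
    obtain ⟨a', ha', _⟩ := hj
    have : a' ∈ A (k + 1) := hmono (by omega) ha'.1
    rw [hAtop] at this
    exact this
  refine ⟨hpj, hjk, ?_⟩
  rintro a' ha' ⟨hreach, hdist⟩ ⟨q, hjq, a'', ha'', hreach', hdist'⟩
  refine hjmax q hjq ⟨a'', ha'', hreach.trans hreach', ?_⟩
  calc (G.dist a a'' : ℝ) ≤ (G.dist a a' : ℝ) + (G.dist a' a'' : ℝ) := by
        exact_mod_cast dist_tri_aux G hreach hreach'
    _ ≤ (ε' ^ (-((j : ℤ) + 1)) - ε' ^ (-((p : ℤ) + 1)))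
        + (ε' ^ (-((q : ℤ) + 1)) - ε' ^ (-((j : ℤ) + 1))) := add_le_add hdist hdist'
    _ = ε' ^ (-((q : ℤ) + 1)) - ε' ^ (-((p : ℤ) + 1)) := by ring
end

section
/- Suppose moreover that ε' ≤ 1/3. Let v be a vertex and i a natural number with i ≤ k. If there exists a vertex a'' ∈ A_{i+1} with dist(v,a'') ≤ ε'^{−(i+1)}, then every vertex a' of level i with dist(v,a') ≤ ε'^{−(i+1)} is not active. -/
open Classical in
/-- If `ε' ≤ 1/3`, `i ≤ k`, and some vertex `a'' ∈ A_{i+1}` satisfies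
`dist(v,a'') ≤ ε'^{-(i+1)}`, then every vertex `a'` of level `i` with
`dist(v,a') ≤ ε'^{-(i+1)}` is not active. -/
theorem stmt17 {V : Type*} [Fintype V] (G : SimpleGraph V)
    (k : ℕ) (hk : 1 ≤ k) (A : ℕ → Set V)
    (hA0 : A 0 = Set.univ) (hnest : ∀ i, A (i + 1) ⊆ A i) (hAtop : A (k + 1) = ∅)
    (ε' : ℝ) (hε0 : 0 < ε') (hε1 : ε' < 1) (hε3 : ε' ≤ 1 / 3)
    (v : V) (i : ℕ) (hik : i ≤ k)
    (hex : ∃ a'' ∈ A (i + 1), G.Reachable v a'' ∧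
      (G.dist v a'' : ℝ) ≤ ε' ^ (-((i : ℤ) + 1))) :
    ∀ a' ∈ A i \ A (i + 1),
      (G.Reachable v a' ∧ (G.dist v a' : ℝ) ≤ ε' ^ (-((i : ℤ) + 1))) →
      ∃ q, i < q ∧ ∃ a'' ∈ A q \ A (q + 1), G.Reachable a' a'' ∧
        (G.dist a' a'' : ℝ) ≤ ε' ^ (-((q : ℤ) + 1)) - ε' ^ (-((i : ℤ) + 1)) := by
  obtain ⟨a'', ha''A, hreach, hd⟩ := hex
  intro a' ha' ⟨hreach', hd'⟩
  -- i + 1 ≤ k since A (k+1) is empty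
  have hik1 : i + 1 ≤ k := by
    rcases Nat.lt_or_ge i k with h | h
    · omega
    · exfalso
      have : i = k := le_antisymm hik h
      rw [this, hAtop] at ha''A
      exact ha''A
  -- the level q of a''
  set P : ℕ → Prop := fun ℓ => a'' ∈ A ℓ with hP
  have hPk : P (i + 1) := ha''A
  set q := Nat.findGreatest P k with hq
  have hq1 : i + 1 ≤ q := Nat.le_findGreatest hik1 hPk
  have hqk : q ≤ k := Nat.findGreatest_le k
  have hqmem : a'' ∈ A q := Nat.findGreatest_spec (by omega) hPk
  have hqnot : a'' ∉ A (q + 1) := by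
    rcases Nat.lt_or_ge q k with h | h
    · intro hc
      exact Nat.findGreatest_is_greatest (Nat.lt_succ_self q) (by omega) hc
    · have : q = k := le_antisymm hqk h
      rw [this, hAtop]
      exact id
  -- distance bound
  have hra : G.Reachable a' a'' := hreach'.symm.trans hreach
  have htri : G.dist a' a'' ≤ G.dist v a' + G.dist v a'' := by
    obtain ⟨p, hp⟩ := hreach'.exists_walk_length_eq_dist
    obtain ⟨r, hr⟩ := hreach.exists_walk_length_eq_dist
    calc G.dist a' a'' ≤ (p.reverse.append r).length := SimpleGraph.dist_le _
      _ = G.dist v a' + G.dist v a'' := by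
          rw [SimpleGraph.Walk.length_append, SimpleGraph.Walk.length_reverse, hp, hr]
  set E : ℝ := ε' ^ (-((i : ℤ) + 1)) with hE
  have hEpos : 0 < E := zpow_pos hε0 _
  have hkey : 3 * E ≤ ε' ^ (-((q : ℤ) + 1)) := by
    have h1 : ε' ^ (-((i : ℤ) + 2)) ≤ ε' ^ (-((q : ℤ) + 1)) := by
      apply zpow_le_zpow_right_of_le_one₀ hε0 hε1.le
      have : (i : ℤ) + 1 ≤ (q : ℤ) := by exact_mod_cast hq1
      omega
    have h2 : ε' ^ (-((i : ℤ) + 2)) = ε'⁻¹ * E := by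
      rw [hE, ← zpow_neg_one, ← zpow_add₀ hε0.ne']
      ring_nf
    have h3 : (3 : ℝ) ≤ ε'⁻¹ := by
      rw [le_inv_comm₀ (by norm_num) hε0]
      linarith
    calc 3 * E ≤ ε'⁻¹ * E := by nlinarith
      _ = ε' ^ (-((i : ℤ) + 2)) := h2.symm
      _ ≤ _ := h1
  refine ⟨q, by omega, a'', ⟨hqmem, hqnot⟩, hra, ?_⟩
  have : (G.dist a' a'' : ℝ) ≤ (G.dist v a' : ℝ) + (G.dist v a'') := by
    exact_mod_cast htri
  linarith
end

section
/- (Diameter bound for graphs covered by heavy balls.) Let G be a connected finite simple graph with m edges, and let r ≥ 1 and μ ≥ 1 be integers. Suppose that for every vertex x there exists a vertex h with dist(x,h) ≤ r such that the set of edges of G with both endpoints in B(h,r) has size at least μ. Then for all vertices u and w, dist(u,w) < (4r+2)·m/μ. -/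
open Finset

private lemma walk_getVert_dist {V : Type*} {G : SimpleGraph V} (hG : G.Connected) :
    ∀ {u v : V} (p : G.Walk u v) (t : ℕ),
      G.dist u (p.getVert t) ≤ t ∧ G.dist (p.getVert t) v ≤ p.length - t := by
  intro u v p
  induction p with
  | nil =>
    intro t
    rw [SimpleGraph.Walk.getVert_of_length_le _ (by simp)]
    simp [SimpleGraph.dist_self]
  | @cons a b c h q ih =>
    intro t
    cases t with
    | zero =>
      simp only [SimpleGraph.Walk.getVert_zero, Nat.sub_zero]
      exact ⟨by simp, SimpleGraph.dist_le _⟩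
    | succ s =>
      have hg : (SimpleGraph.Walk.cons h q).getVert (s + 1) = q.getVert s :=
        SimpleGraph.Walk.getVert_cons_succ q h
      rw [hg]
      constructor
      · calc G.dist a (q.getVert s) ≤ G.dist a b + G.dist b (q.getVert s) :=
              hG.dist_triangle
          _ ≤ 1 + s := by
              have h1 : G.dist a b ≤ 1 := by
                simpa using SimpleGraph.dist_le h.toWalk
              exact Nat.add_le_add h1 (ih s).1
          _ = s + 1 := Nat.add_comm _ _
      · have := (ih s).2
        simpa [SimpleGraph.Walk.length_cons, Nat.succ_sub_succ] using this

/-- Diameter bound for graphs covered by heavy balls: if `G` is a connected finite simple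
graph with edge set of size `m`, and every vertex `x` has a vertex `h` with `dist(x,h) ≤ r`
such that at least `μ` edges have both endpoints in the ball `B(h,r)`, then every pair of
vertices is at distance less than `(4r+2)·m/μ`. -/
theorem stmt18 {V : Type*} [Fintype V] (G : SimpleGraph V) (hG : G.Connected)
    (r μ : ℕ) (hr : 1 ≤ r) (hμ : 1 ≤ μ)
    (hheavy : ∀ x : V, ∃ h : V, G.dist x h ≤ r ∧
      μ ≤ {e ∈ G.edgeSet | ∀ y ∈ e, G.dist h y ≤ r}.ncard) :
    ∀ u w : V, (G.dist u w : ℝ) < (4 * r + 2) * G.edgeSet.ncard / μ := by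
  classical
  intro u w
  set d := G.dist u w with hd
  set s := 4 * r + 2 with hs
  have hs0 : 0 < s := by omega
  obtain ⟨p, hp⟩ := hG.exists_walk_length_eq_dist u w
  set k := d / s + 1 with hk
  -- the sample points
  set x : ℕ → V := fun i => p.getVert (i * s) with hx
  have hxle : ∀ i, i < k → i * s ≤ d := by
    intro i hi
    have : i ≤ d / s := by omega
    calc i * s ≤ (d / s) * s := Nat.mul_le_mul_right s this
      _ ≤ d := Nat.div_mul_le_self d s
  have hdistux : ∀ i, i < k → G.dist u (x i) = i * s := by
    intro i hi
    have h1 : G.dist u (x i) ≤ i * s := (walk_getVert_dist hG p (i * s)).1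
    have h2 : G.dist (x i) w ≤ p.length - i * s := (walk_getVert_dist hG p (i * s)).2
    have htri : d ≤ G.dist u (x i) + G.dist (x i) w := hG.dist_triangle
    have hps : p.length = d := hp ▸ rfl
    have := hxle i hi
    omega
  -- heavy centers
  choose h hh1 hh2 using hheavy
  -- the edge sets as finsets
  set S : ℕ → Finset (Sym2 V) :=
    fun i => {e ∈ G.edgeFinset | ∀ y ∈ e, G.dist (h (x i)) y ≤ r} with hS
  have hScard : ∀ i, μ ≤ (S i).card := by
    intro i
    have := hh2 (x i)
    have heq : {e ∈ G.edgeSet | ∀ y ∈ e, G.dist (h (x i)) y ≤ r} = ↑(S i) := by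
      ext e
      simp [hS, SimpleGraph.mem_edgeFinset]
    rw [heq] at this
    simpa [Set.ncard_coe_finset] using this
  -- disjointness
  have hdisj : ∀ i ∈ range k, ∀ j ∈ range k, i ≠ j → Disjoint (S i) (S j) := by
    intro i hi j hj hij
    rw [Finset.disjoint_left]
    intro e hei hej
    have hei' : ∀ y ∈ e, G.dist (h (x i)) y ≤ r := (Finset.mem_filter.mp hei).2
    have hej' : ∀ y ∈ e, G.dist (h (x j)) y ≤ r := (Finset.mem_filter.mp hej).2
    obtain ⟨a, b⟩ := e
    have ha1 : G.dist (h (x i)) a ≤ r := hei' a (by simp)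
    have ha2 : G.dist (h (x j)) a ≤ r := hej' a (by simp)
    -- dist x_i x_j ≤ 4r
    have hclose : G.dist (x i) (x j) ≤ 4 * r := by
      calc G.dist (x i) (x j)
          ≤ G.dist (x i) (h (x i)) + G.dist (h (x i)) (x j) := hG.dist_triangle
        _ ≤ r + (G.dist (h (x i)) a + G.dist a (x j)) :=
            Nat.add_le_add (hh1 (x i)) hG.dist_triangle
        _ ≤ r + (r + (G.dist a (h (x j)) + G.dist (h (x j)) (x j))) := by
            refine Nat.add_le_add_left (Nat.add_le_add ha1 hG.dist_triangle) _
        _ ≤ r + (r + (r + r)) := by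
            refine Nat.add_le_add_left (Nat.add_le_add_left (Nat.add_le_add ?_ ?_) _) _
            · rwa [SimpleGraph.dist_comm]
            · rw [SimpleGraph.dist_comm]; exact hh1 (x j)
        _ = 4 * r := by ring
    -- but dist x_i x_j ≥ s
    have hfar : s ≤ G.dist (x i) (x j) := by
      simp only [Finset.mem_range] at hi hj
      rcases Nat.lt_or_ge i j with hlt | hge
      · have := hdistux i hi
        have := hdistux j hj
        have htri : G.dist u (x j) ≤ G.dist u (x i) + G.dist (x i) (x j) :=
          hG.dist_triangle
        have : j * s ≤ i * s + G.dist (x i) (x j) := by omega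
        have hij' : i + 1 ≤ j := hlt
        nlinarith [Nat.mul_le_mul_right s hij']
      · have hlt : j < i := by omega
        have := hdistux i hi
        have := hdistux j hj
        have htri : G.dist u (x i) ≤ G.dist u (x j) + G.dist (x j) (x i) :=
          hG.dist_triangle
        rw [SimpleGraph.dist_comm (u := x i) (v := x j)]
        have hij' : j + 1 ≤ i := hlt
        nlinarith [Nat.mul_le_mul_right s hij']
    omega
  -- counting
  have hsub : (range k).biUnion S ⊆ G.edgeFinset := by
    intro e he
    simp only [Finset.mem_biUnion] at he
    obtain ⟨i, _, hei⟩ := he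
    exact (Finset.mem_filter.mp hei).1
  have hsum : k * μ ≤ G.edgeFinset.card := by
    calc k * μ = ∑ _i ∈ range k, μ := by simp [Nat.mul_comm]
      _ ≤ ∑ i ∈ range k, (S i).card := Finset.sum_le_sum fun i _ => hScard i
      _ = ((range k).biUnion S).card := (Finset.card_biUnion hdisj).symm
      _ ≤ G.edgeFinset.card := Finset.card_le_card hsub
  have hm : G.edgeSet.ncard = G.edgeFinset.card := by
    rw [← Set.ncard_coe_finset]
    congr 1
    simp
  have hdk : d < k * s := by
    have h1 : d % s < s := Nat.mod_lt d hs0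
    have h2 : s * (d / s) + d % s = d := Nat.div_add_mod d s
    calc d = s * (d / s) + d % s := h2.symm
      _ < s * (d / s) + s := by omega
      _ = k * s := by rw [hk]; ring
  -- final: d * μ < s * m
  have hfin : d * μ < s * G.edgeSet.ncard := by
    rw [hm]
    calc d * μ < (k * s) * μ := by
          have : 0 < μ := hμ
          exact (Nat.mul_lt_mul_right this).mpr hdk
      _ = s * (k * μ) := by ring
      _ ≤ s * G.edgeFinset.card := Nat.mul_le_mul_left s hsum
  have hμR : (0:ℝ) < μ := by exact_mod_cast hμ
  rw [lt_div_iff₀ hμR]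
  have : (d * μ : ℝ) < (s : ℝ) * G.edgeSet.ncard := by exact_mod_cast hfin
  push_cast [hs] at this ⊢
  linarith
end
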